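/- arXiv:0812.0214 — 4 statements merged into one kernel-verified Lean document; each statement's English description precedes it below -/
import Mathlib

section
/- Let X, Y ⊆ I be Lebesgue measurable sets of measure 1 and let ψ be a bijection from X onto Y such that for every interval J ⊆ I the sets ψ(J ∩ X) and ψ⁻¹(J ∩ Y) are Lebesgue measurable with μ(ψ(J ∩ X)) = μ(ψ⁻¹(J ∩ Y)) = μ(J). Then there is φ ∈ Φ₀ such that φ(x) = ψ(x) for almost every x ∈ I. -/
open MeasureTheory Set
open scoped symmDiff

noncomputable section

/-- The unit interval `[0,1]` with Lebesgue measure. -/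
abbrev I01 : Type := unitInterval

/-- A graphon: a bounded symmetric Lebesgue(=a.e.)-measurable function on `I² `. -/
def IsGraphon (W : I01 × I01 → ℝ) : Prop :=
  (∀ x y : I01, W (x, y) = W (y, x)) ∧ (∃ C : ℝ, ∀ p, |W p| ≤ C) ∧ AEMeasurable W volume

/-- The cut norm of `W`. -/
def cutNorm (W : I01 × I01 → ℝ) : ℝ :=
  sSup { r : ℝ | ∃ S T : Set I01, NullMeasurableSet S volume ∧ NullMeasurableSet T volume ∧
    r = |∫ p in S ×ˢ T, W p| }

/-- The `L¹` norm of `W`. -/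
def l1Norm (W : I01 × I01 → ℝ) : ℝ := ∫ p, |W p|

/-- Lebesgue-measurable measure preserving self-maps of `[0,1]` (the class `Φ`). -/
def MPhi (φ : I01 → I01) : Prop :=
  AEMeasurable φ volume ∧
    ∀ A : Set I01, NullMeasurableSet A volume → volume (φ ⁻¹' A) = volume A

/-- Invertible measure preserving maps (the class `Φ₀`). -/
def MPhi0 (φ : I01 → I01) : Prop :=
  Function.Bijective φ ∧ MPhi φ ∧ MPhi (Function.invFun φ)

/-- `W^φ (x,y) = W (φ x, φ y)`. -/
def compMap (W : I01 × I01 → ℝ) (φ : I01 → I01) : I01 × I01 → ℝ :=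
  fun p => W (φ p.1, φ p.2)

/-- The distance `δ₁` on graphons. -/
def gDelta1 (U W : I01 × I01 → ℝ) : ℝ :=
  sInf { r : ℝ | ∃ φ : I01 → I01, MPhi0 φ ∧ r = l1Norm (fun p => U p - compMap W φ p) }

/-- The cut distance `δ_□` on graphons. -/
def gDeltaBox (U W : I01 × I01 → ℝ) : ℝ :=
  sInf { r : ℝ | ∃ φ : I01 → I01, MPhi0 φ ∧ r = cutNorm (fun p => U p - compMap W φ p) }

open Classical in
/-- The homomorphism density `t(F,W)` of a graph `F` on `[k]` in `W`. -/
def homDensity {k : ℕ} (F : SimpleGraph (Fin k)) (W : I01 × I01 → ℝ) : ℝ :=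
  ∫ x : Fin k → I01,
    ∏ e ∈ Finset.univ.filter (fun e : Fin k × Fin k => e.1 < e.2 ∧ F.Adj e.1 e.2),
      W (x e.1, x e.2)

open Classical in
/-- The real-valued adjacency indicator of a graph. -/
def adjInd {V : Type*} (G : SimpleGraph V) (i j : V) : ℝ := if G.Adj i j then 1 else 0

/-- Overlay matrices: nonnegative with row sums `1/m` and column sums `1/n`. -/
def IsOverlay (m n : ℕ) (A : Matrix (Fin m) (Fin n) ℝ) : Prop :=
  (∀ i j, 0 ≤ A i j) ∧ (∀ i, ∑ j, A i j = 1 / (m : ℝ)) ∧ (∀ j, ∑ i, A i j = 1 / (n : ℝ))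

/-- The fractional distance `δ₁` between two graphs. -/
def graphDelta1 {m n : ℕ} (G : SimpleGraph (Fin m)) (H : SimpleGraph (Fin n)) : ℝ :=
  sInf { r : ℝ | ∃ A : Matrix (Fin m) (Fin n) ℝ, IsOverlay m n A ∧
    r = ∑ i, ∑ j, ∑ g, ∑ h, A i g * A j h * |adjInd G i j - adjInd H g h| }

/-- The edit distance `δ̂₁` between two graphs on `[n]`. -/
def editDist {n : ℕ} (G H : SimpleGraph (Fin n)) : ℝ :=
  (2 / (n : ℝ) ^ 2) *
    sInf { r : ℝ | ∃ σ : Fin n ≃ Fin n,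
      r = (∑ i, ∑ j, |adjInd G (σ i) (σ j) - adjInd H i j|) / 2 }

open Classical in
/-- The step graphon `W_G` associated with a graph `G` on `[n]`. -/
def stepGraphon {n : ℕ} (G : SimpleGraph (Fin n)) : I01 × I01 → ℝ :=
  fun p => if ∃ k l : Fin n, G.Adj k l ∧
      ((k : ℕ) : ℝ) / n ≤ (p.1 : ℝ) ∧ (p.1 : ℝ) < ((k : ℕ) + 1 : ℝ) / n ∧
      ((l : ℕ) : ℝ) / n ≤ (p.2 : ℝ) ∧ (p.2 : ℝ) < ((l : ℕ) + 1 : ℝ) / n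
    then 1 else 0


section AuxiliaryLemmas
open Filter ENNReal Cardinal

private lemma cantor_range_null : volume (Set.range (Cardinal.cantorFunction (1/3))) = 0 := by
  set c : ℝ := 1/3 with hc
  have hc0 : (0:ℝ) ≤ c := by norm_num
  have hc1 : c < 1 := by norm_num
  have key : ∀ n : ℕ, volume (Set.range (cantorFunction c)) ≤
      ENNReal.ofReal ((2/3)^n * (3/2)) := by
    intro n
    set L : (Fin n → Bool) → ℝ := fun s => ∑ k : Fin n, cond (s k) (c ^ (k:ℕ)) 0 with hL
    have cover : Set.range (cantorFunction c) ⊆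
        ⋃ s : Fin n → Bool, Icc (L s) (L s + c^n * (3/2)) := by
      rintro _ ⟨f, rfl⟩
      refine mem_iUnion.2 ⟨fun k => f k, ?_⟩
      have hsum := Cardinal.summable_cantor_function f hc0 hc1
      have hsplit : (∑ k ∈ Finset.range n, cantorFunctionAux c f k)
          + ∑' k, cantorFunctionAux c f (k + n) = cantorFunction c f :=
        Summable.sum_add_tsum_nat_add n hsum
      have hLeq : ∑ k ∈ Finset.range n, cantorFunctionAux c f k = L (fun k => f k) := by
        rw [hL, Finset.sum_range]
        rfl
      have htail0 : 0 ≤ ∑' k, cantorFunctionAux c f (k + n) :=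
        tsum_nonneg fun k => cantorFunctionAux_nonneg hc0
      have hshift : Summable (fun k => cantorFunctionAux c f (k + n)) :=
        (summable_nat_add_iff n).2 hsum
      have hgeo : Summable (fun k : ℕ => c^n * c^k) :=
        (summable_geometric_of_lt_one hc0 hc1).mul_left _
      have htail1 : (∑' k, cantorFunctionAux c f (k + n)) ≤ c^n * (3/2) := by
        have h1 : (∑' k, cantorFunctionAux c f (k + n)) ≤ ∑' k : ℕ, c^n * c^k := by
          refine Summable.tsum_le_tsum (fun k => ?_) hshift hgeo
          have : c^n * c^k = c^(k+n) := by rw [pow_add]; ring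
          rw [this]
          cases h : f (k + n)
          · simp [cantorFunctionAux_false h, pow_nonneg hc0]
          · simp [cantorFunctionAux_true h]
        refine h1.trans ?_
        rw [tsum_mul_left, tsum_geometric_of_lt_one hc0 hc1]
        rw [hc]; norm_num
      constructor
      · rw [← hsplit, hLeq]; linarith
      · rw [← hsplit, hLeq]; linarith
    calc volume (Set.range (cantorFunction c))
        ≤ volume (⋃ s : Fin n → Bool, Icc (L s) (L s + c^n * (3/2))) := measure_mono cover
      _ ≤ ∑ s : Fin n → Bool, volume (Icc (L s) (L s + c^n * (3/2))) :=
          measure_iUnion_fintype_le _ _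
      _ = ∑ s : Fin n → Bool, ENNReal.ofReal (c^n * (3/2)) := by
          simp [Real.volume_Icc]
      _ = (Fintype.card (Fin n → Bool)) * ENNReal.ofReal (c^n * (3/2)) := by
          rw [Finset.sum_const, Finset.card_univ, nsmul_eq_mul]
      _ = ENNReal.ofReal ((2/3)^n * (3/2)) := by
          rw [Fintype.card_fun, Fintype.card_bool, Fintype.card_fin]
          rw [← ENNReal.ofReal_natCast, ← ENNReal.ofReal_mul (by positivity)]
          congr 1
          push_cast
          rw [hc, div_pow, div_pow, one_pow]
          ring
  refine le_antisymm ?_ (by simp)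
  refine ge_of_tendsto' (f := fun n => ENNReal.ofReal ((2/3:ℝ)^n * (3/2))) (x := atTop) ?_ key
  have hreal : Tendsto (fun n : ℕ => (2/3:ℝ)^n * (3/2)) atTop (nhds 0) := by
    have := tendsto_pow_atTop_nhds_zero_of_lt_one (r := (2/3:ℝ)) (by norm_num) (by norm_num)
    simpa using this.mul_const (3/2:ℝ)
  have := (ENNReal.continuous_ofReal.tendsto 0).comp hreal
  simpa [Function.comp_def] using this

private lemma keyA (X Y : Set I01) (ψ : I01 → I01)
    (hmaps : Set.MapsTo ψ X Y)
    (h : ∀ J : Set I01, ((fun x : I01 => (x : ℝ)) '' J).OrdConnected →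
      NullMeasurableSet (X ∩ ψ ⁻¹' (J ∩ Y)) volume ∧
      volume (X ∩ ψ ⁻¹' (J ∩ Y)) = volume J) :
    ∀ A : Set I01, NullMeasurableSet A volume →
      NullMeasurableSet (X ∩ ψ ⁻¹' (A ∩ Y)) volume ∧
      volume (X ∩ ψ ⁻¹' (A ∩ Y)) = volume A := by
  -- normalization : X ∩ ψ⁻¹(A ∩ Y) = X ∩ ψ⁻¹ A
  have hnorm : ∀ A : Set I01, X ∩ ψ ⁻¹' (A ∩ Y) = X ∩ ψ ⁻¹' A := by
    intro A
    ext x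
    simp only [mem_inter_iff, mem_preimage]
    exact ⟨fun ⟨h1, h2, _⟩ => ⟨h1, h2⟩, fun ⟨h1, h2⟩ => ⟨h1, h2, hmaps h1⟩⟩
  -- univ is OK
  have huniv : ((fun x : I01 => (x : ℝ)) '' (univ : Set I01)).OrdConnected := by
    rw [image_univ]
    have : Set.range (fun x : I01 => (x : ℝ)) = Set.Icc 0 1 := Subtype.range_coe
    rw [this]; exact ordConnected_Icc
  have hXuniv : X ∩ ψ ⁻¹' ((univ : Set I01) ∩ Y) = X := by
    rw [hnorm]; simp
  have hXnm : NullMeasurableSet X volume := by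
    have := (h univ huniv).1; rwa [hXuniv] at this
  have hX1 : volume X = 1 := by
    have := (h univ huniv).2; rwa [hXuniv, measure_univ] at this
  -- the sets ψ⁻¹(Iic b)-style are fine
  have hIic : ∀ b : ℝ, NullMeasurableSet (X ∩ ψ ⁻¹' (Subtype.val ⁻¹' Set.Iic b)) volume ∧
      volume (X ∩ ψ ⁻¹' (Subtype.val ⁻¹' Set.Iic b)) = volume (Subtype.val ⁻¹' Set.Iic b : Set I01) := by
    intro b
    have hJ : ((fun x : I01 => (x : ℝ)) '' (Subtype.val ⁻¹' Set.Iic b)).OrdConnected := by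
      have : (fun x : I01 => (x : ℝ)) '' (Subtype.val ⁻¹' Set.Iic b)
          = Set.Iic b ∩ Set.Icc 0 1 := by
        rw [Set.image_preimage_eq_inter_range, Subtype.range_coe]
      rw [this]
      exact Set.OrdConnected.inter ordConnected_Iic ordConnected_Icc
    have := h _ hJ
    rwa [hnorm] at this
  -- every measurable set is good
  have hmeas : ∀ A : Set I01, MeasurableSet A → NullMeasurableSet (X ∩ ψ ⁻¹' A) volume := by
    have hle : (inferInstance : MeasurableSpace ℝ) ≤
        { MeasurableSet' := fun B : Set ℝ =>
            NullMeasurableSet (X ∩ ψ ⁻¹' (Subtype.val ⁻¹' B)) volume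
          measurableSet_empty := by simp
          measurableSet_compl := by
            intro B hB
            have : X ∩ ψ ⁻¹' (Subtype.val ⁻¹' Bᶜ)
                = X \ (X ∩ ψ ⁻¹' (Subtype.val ⁻¹' B)) := by
              ext x
              simp only [mem_inter_iff, mem_preimage, mem_compl_iff, mem_diff]
              tauto
            rw [this]
            exact hXnm.diff hB
          measurableSet_iUnion := by
            intro g hg
            have : X ∩ ψ ⁻¹' (Subtype.val ⁻¹' (⋃ i, g i))
                = ⋃ i, X ∩ ψ ⁻¹' (Subtype.val ⁻¹' (g i)) := by
              simp [preimage_iUnion, inter_iUnion]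
            rw [this]
            exact NullMeasurableSet.iUnion hg } := by
      rw [(inferInstance : BorelSpace ℝ).measurable_eq, borel_eq_generateFrom_Iic ℝ]
      refine MeasurableSpace.generateFrom_le ?_
      rintro _ ⟨b, rfl⟩
      exact (hIic b).1
    intro A hA
    obtain ⟨B, hB, rfl⟩ := MeasurableSpace.measurableSet_comap.mp hA
    exact hle B hB
  -- the measure ν
  set m : (A : Set I01) → MeasurableSet A → ℝ≥0∞ :=
    fun A _ => volume (X ∩ ψ ⁻¹' A) with hm
  have hm0 : m ∅ MeasurableSet.empty = 0 := by simp [hm]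
  have hmU : ∀ ⦃g : ℕ → Set I01⦄ (hg : ∀ i, MeasurableSet (g i)),
      Pairwise (Function.onFun Disjoint g) →
      m (⋃ i, g i) (MeasurableSet.iUnion hg) = ∑' i, m (g i) (hg i) := by
    intro g hg hdisj
    simp only [hm]
    have : X ∩ ψ ⁻¹' (⋃ i, g i) = ⋃ i, X ∩ ψ ⁻¹' (g i) := by
      simp [preimage_iUnion, inter_iUnion]
    rw [this]
    refine measure_iUnion₀ ?_ (fun i => hmeas _ (hg i))
    intro i j hij
    exact Disjoint.aedisjoint
      (((hdisj hij).preimage ψ).mono inter_subset_right inter_subset_right)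
  set ν : Measure I01 := Measure.ofMeasurable m hm0 hmU with hν
  have hνapp : ∀ (A : Set I01), MeasurableSet A → ν A = volume (X ∩ ψ ⁻¹' A) :=
    fun A hA => Measure.ofMeasurable_apply A hA
  haveI : IsFiniteMeasure ν := by
    constructor
    rw [hνapp univ MeasurableSet.univ]
    simp only [preimage_univ, inter_univ]
    rw [hX1]; exact one_lt_top
  have hνvol : ν = volume := by
    refine MeasureTheory.ext_of_generate_finite
      ((fun B : Set ℝ => Subtype.val ⁻¹' B) '' (Set.range Set.Iic)) ?_ ?_ ?_ ?_
    · show (inferInstance : MeasurableSpace I01) = _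
      conv_lhs => rw [show (inferInstance : MeasurableSpace I01)
        = MeasurableSpace.comap Subtype.val (inferInstance : MeasurableSpace ℝ) from rfl]
      rw [(inferInstance : BorelSpace ℝ).measurable_eq, borel_eq_generateFrom_Iic ℝ,
        MeasurableSpace.comap_generateFrom]
    · rintro _ ⟨_, ⟨a, rfl⟩, rfl⟩ _ ⟨_, ⟨b, rfl⟩, rfl⟩ _
      refine ⟨Set.Iic (a ⊓ b), ⟨a ⊓ b, rfl⟩, ?_⟩
      rw [← Set.Iic_inter_Iic]
      exact preimage_inter
    · rintro _ ⟨_, ⟨b, rfl⟩, rfl⟩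
      rw [hνapp _ (measurable_subtype_coe measurableSet_Iic)]
      exact (hIic b).2
    · rw [hνapp univ MeasurableSet.univ]
      simp only [preimage_univ, inter_univ]
      rw [hX1, measure_univ]
  -- now the general case
  intro A hA
  obtain ⟨B, hBsub, hBmeas, hBae⟩ := hA.exists_measurable_subset_ae_eq
  have hABnull : volume (A \ B) = 0 := by
    have := (MeasureTheory.ae_eq_set.mp hBae).2
    simpa using this
  have hnullpre : ∀ N : Set I01, volume N = 0 → volume (X ∩ ψ ⁻¹' N) = 0 := by
    intro N hN
    have hsub : X ∩ ψ ⁻¹' N ⊆ X ∩ ψ ⁻¹' (toMeasurable volume N) :=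
      inter_subset_inter_right _ (preimage_mono (subset_toMeasurable _ _))
    refine measure_mono_null hsub ?_
    have h1 : volume (X ∩ ψ ⁻¹' (toMeasurable volume N)) = ν (toMeasurable volume N) :=
      (hνapp _ (measurableSet_toMeasurable _ _)).symm
    rw [h1, hνvol, measure_toMeasurable, hN]
  have haeeq : (X ∩ ψ ⁻¹' B : Set I01) =ᵐ[volume] (X ∩ ψ ⁻¹' A : Set I01) := by
    rw [MeasureTheory.ae_eq_set]
    constructor
    · refine measure_mono_null ?_ (hnullpre (B \ A) ?_)
      · intro x hx
        simp only [mem_diff, mem_inter_iff, mem_preimage] at hx ⊢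
        tauto
      · exact measure_mono_null (diff_subset_diff_left hBsub) (by simp)
    · refine measure_mono_null ?_ (hnullpre (A \ B) hABnull)
      intro x hx
      simp only [mem_diff, mem_inter_iff, mem_preimage] at hx ⊢
      tauto
  rw [hnorm]
  constructor
  · exact (hmeas B hBmeas).congr haeeq
  · rw [← measure_congr haeeq, ← hνapp B hBmeas, hνvol, measure_congr hBae]

private lemma keyM (X Y : Set I01) (ψ φ : I01 → I01)
    (hmaps : Set.MapsTo ψ X Y)
    (hfull : ∀ A : Set I01, NullMeasurableSet A volume →
      NullMeasurableSet (X ∩ ψ ⁻¹' (A ∩ Y)) volume ∧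
      volume (X ∩ ψ ⁻¹' (A ∩ Y)) = volume A)
    (D : Set I01) (hD0 : volume D = 0)
    (hag : ∀ x, x ∉ D → φ x = ψ x) : MPhi φ := by
  have hXnm : NullMeasurableSet X volume := by
    have := (hfull univ MeasurableSet.univ.nullMeasurableSet).1
    have he : X ∩ ψ ⁻¹' ((univ : Set I01) ∩ Y) = X := by
      ext x
      simp only [univ_inter, mem_inter_iff, mem_preimage]
      exact ⟨fun ⟨h1, _⟩ => h1, fun h1 => ⟨h1, hmaps h1⟩⟩
    rwa [he] at this
  have hX1 : volume X = 1 := by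
    have := (hfull univ MeasurableSet.univ.nullMeasurableSet).2
    have he : X ∩ ψ ⁻¹' ((univ : Set I01) ∩ Y) = X := by
      ext x
      simp only [univ_inter, mem_inter_iff, mem_preimage]
      exact ⟨fun ⟨h1, _⟩ => h1, fun h1 => ⟨h1, hmaps h1⟩⟩
    rwa [he, measure_univ] at this
  have hXc : volume Xᶜ = 0 := by
    rw [measure_compl₀ hXnm (by simp), hX1, measure_univ, tsub_self]
  have hae : ∀ A : Set I01, (φ ⁻¹' A : Set I01) =ᵐ[volume] (X ∩ ψ ⁻¹' (A ∩ Y) : Set I01) := by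
    intro A
    rw [MeasureTheory.ae_eq_set]
    have hDXc : volume (D ∪ Xᶜ) = 0 := measure_union_null hD0 hXc
    constructor
    · refine measure_mono_null ?_ hDXc
      intro x hx
      simp only [mem_diff, mem_preimage, mem_inter_iff] at hx
      by_contra hcon
      simp only [mem_union, mem_compl_iff, not_or, not_not] at hcon
      exact hx.2 ⟨hcon.2, by rw [← hag x hcon.1]; exact hx.1, hmaps hcon.2⟩
    · refine measure_mono_null ?_ hDXc
      intro x hx
      simp only [mem_diff, mem_inter_iff, mem_preimage] at hx
      by_contra hcon
      simp only [mem_union, mem_compl_iff, not_or, not_not] at hcon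
      exact hx.2 (by rw [hag x hcon.1]; exact hx.1.2.1)
  constructor
  · refine MeasureTheory.NullMeasurable.aemeasurable ?_
    intro A hA
    exact ((hfull A hA.nullMeasurableSet).1).congr (hae A).symm
  · intro A hA
    rw [measure_congr (hae A)]
    exact (hfull A hA).2

end AuxiliaryLemmas

open Filter ENNReal in
/-- A bijection between full-measure subsets of `[0,1]` that is measure preserving on
intervals agrees almost everywhere with an element of `Φ₀`. -/
theorem exists_mPhi0_ae_eq (X Y : Set I01)
    (hXm : NullMeasurableSet X volume) (hYm : NullMeasurableSet Y volume)
    (hX : volume X = 1) (hY : volume Y = 1)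
    (ψ : I01 → I01) (hbij : Set.BijOn ψ X Y)
    (hmp : ∀ J : Set I01, ((fun x : I01 => (x : ℝ)) '' J).OrdConnected →
      NullMeasurableSet (ψ '' (J ∩ X)) volume ∧
      NullMeasurableSet (X ∩ ψ ⁻¹' (J ∩ Y)) volume ∧
      volume (ψ '' (J ∩ X)) = volume J ∧
      volume (X ∩ ψ ⁻¹' (J ∩ Y)) = volume J) :
    ∃ φ : I01 → I01, MPhi0 φ ∧ φ =ᵐ[volume] ψ := by
  classical
  have h1 := keyA X Y ψ hbij.mapsTo (fun J hJ => ⟨(hmp J hJ).2.1, (hmp J hJ).2.2.2⟩)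
  -- the inverse map
  set χ : I01 → I01 := Function.invFunOn ψ X with hχdef
  have hinv : Set.InvOn χ ψ X Y := hbij.invOn_invFunOn
  have hbijχ : Set.BijOn χ Y X := Set.BijOn.symm hinv.symm hbij
  have himg : ∀ J : Set I01, Y ∩ χ ⁻¹' (J ∩ X) = ψ '' (J ∩ X) := by
    intro J
    ext y
    constructor
    · rintro ⟨hy, hχJ, hχX⟩
      exact ⟨χ y, ⟨hχJ, hχX⟩, hinv.2 hy⟩
    · rintro ⟨x, ⟨hxJ, hxX⟩, rfl⟩
      have hx' : χ (ψ x) = x := hinv.1 hxX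
      exact ⟨hbij.mapsTo hxX, by rw [mem_preimage, hx']; exact ⟨hxJ, hxX⟩⟩
  have h2 := keyA Y X χ hbijχ.mapsTo (fun J hJ => by
    rw [himg J]
    exact ⟨(hmp J hJ).1, (hmp J hJ).2.2.1⟩)
  -- the null continuum set
  set c : ℝ := 1/3 with hc
  have hc0 : (0:ℝ) ≤ c := by norm_num
  have hc1 : c < 1 := by norm_num
  set M : Set ℝ := toMeasurable volume (Set.range (Cardinal.cantorFunction c)) with hM
  have hM0 : volume M = 0 := by
    rw [hM, measure_toMeasurable]
    exact cantor_range_null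
  set C : Set I01 := Subtype.val ⁻¹' M with hCdef
  have hC0 : volume C = 0 := by
    rw [hCdef, volume_preimage_coe (measurableSet_Icc.nullMeasurableSet) (measurableSet_toMeasurable _ _)]
    exact measure_mono_null inter_subset_left hM0
  have hCnm : NullMeasurableSet C volume := NullMeasurableSet.of_null hC0
  -- the injection from ℕ → Bool into C
  set shift : (ℕ → Bool) → ℕ → Bool := fun f n => Nat.casesOn n false (fun m => f m) with hshift
  have hshift_inj : Function.Injective shift := by
    intro f g hfg
    funext n
    exact congrFun hfg (n + 1)
  have hval : ∀ f : ℕ → Bool, Cardinal.cantorFunction c (shift f) = c * Cardinal.cantorFunction c f := by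
    intro f
    rw [Cardinal.cantorFunction_succ _ hc0 hc1]
    simp [hshift]
  have hbound : ∀ f : ℕ → Bool, Cardinal.cantorFunction c f ∈ Set.Icc (0:ℝ) (3/2) := by
    intro f
    constructor
    · exact tsum_nonneg fun n => Cardinal.cantorFunctionAux_nonneg hc0
    · have hle := Cardinal.cantorFunction_le (c := c) (f := f) (g := fun _ => true) hc0 hc1 (fun n _ => rfl)
      refine hle.trans ?_
      have : Cardinal.cantorFunction c (fun _ => true) = ∑' n : ℕ, c ^ n := by
        refine tsum_congr fun n => ?_
        exact Cardinal.cantorFunctionAux_true rfl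
      rw [this, tsum_geometric_of_lt_one hc0 hc1, hc]
      norm_num
  set ι : (ℕ → Bool) → I01 := fun f =>
    ⟨Cardinal.cantorFunction c (shift f), by
      constructor
      · rw [hval f]
        exact mul_nonneg hc0 (hbound f).1
      · rw [hval f]
        have := (hbound f).2
        rw [hc]
        nlinarith [(hbound f).1]⟩ with hι
  have hι_inj : Function.Injective ι := by
    intro f g hfg
    have := congrArg Subtype.val hfg
    exact hshift_inj (Cardinal.cantorFunction_injective (by norm_num) (by norm_num) this)
  have hιC : ∀ f : ℕ → Bool, ι f ∈ C := by
    intro f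
    show (Cardinal.cantorFunction c (shift f)) ∈ M
    exact subset_toMeasurable _ _ ⟨shift f, rfl⟩
  -- the shrunk domain
  set X₂ : Set I01 := X \ (C ∪ ψ ⁻¹' C) with hX₂def
  have hsub : X₂ ⊆ X := diff_subset
  have hpreC := h1 C hCnm
  have hpreC0 : volume (X ∩ ψ ⁻¹' (C ∩ Y)) = 0 := by rw [hpreC.2, hC0]
  have hX2eq : X₂ = (X \ C) \ (X ∩ ψ ⁻¹' (C ∩ Y)) := by
    ext x
    constructor
    · rintro ⟨hx, hxn⟩
      have hxC : x ∉ C := fun h => hxn (Or.inl h)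
      have hxP : x ∉ ψ ⁻¹' C := fun h => hxn (Or.inr h)
      exact ⟨⟨hx, hxC⟩, fun h => hxP h.2.1⟩
    · rintro ⟨⟨hx, hxC⟩, h2'⟩
      refine ⟨hx, ?_⟩
      rintro (h | h)
      · exact hxC h
      · exact h2' ⟨hx, h, hbij.mapsTo hx⟩
  have hX2nm : NullMeasurableSet X₂ volume := by
    rw [hX2eq]
    exact (hXm.diff hCnm).diff hpreC.1
  have hX2vol : volume X₂ = 1 := by
    refine le_antisymm prob_le_one ?_
    have hd : X ⊆ X₂ ∪ (C ∪ (X ∩ ψ ⁻¹' (C ∩ Y))) := by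
      intro x hx
      by_cases hxC : x ∈ C
      · exact Or.inr (Or.inl hxC)
      by_cases hxP : ψ x ∈ C
      · exact Or.inr (Or.inr ⟨hx, hxP, hbij.mapsTo hx⟩)
      · exact Or.inl ⟨hx, fun h => h.elim hxC hxP⟩
    calc (1:ℝ≥0∞) = volume X := hX.symm
      _ ≤ volume (X₂ ∪ (C ∪ (X ∩ ψ ⁻¹' (C ∩ Y)))) := measure_mono hd
      _ ≤ volume X₂ + volume (C ∪ (X ∩ ψ ⁻¹' (C ∩ Y))) := measure_union_le _ _
      _ = volume X₂ := by rw [measure_union_null hC0 hpreC0, add_zero]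
  have hX2c0 : volume X₂ᶜ = 0 := by
    rw [measure_compl₀ hX2nm (by simp), hX2vol, measure_univ, tsub_self]
  -- the shrunk codomain
  set Y₂ : Set I01 := ψ '' X₂ with hY₂def
  have hY2eq : Y ∩ χ ⁻¹' (X₂ ∩ X) = Y₂ := by
    rw [himg X₂, inter_eq_self_of_subset_left hsub]
  have h2X₂ := h2 X₂ hX2nm
  have hY2nm : NullMeasurableSet Y₂ volume := by rw [← hY2eq]; exact h2X₂.1
  have hY2vol : volume Y₂ = 1 := by rw [← hY2eq, h2X₂.2, hX2vol]
  have hY2c0 : volume Y₂ᶜ = 0 := by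
    rw [measure_compl₀ hY2nm (by simp), hY2vol, measure_univ, tsub_self]
  -- the complements have the cardinality of the continuum
  have hcardgen : ∀ S : Set I01, (∀ f : ℕ → Bool, ι f ∈ S) → Cardinal.mk S = Cardinal.continuum := by
    intro S hS
    refine le_antisymm ?_ ?_
    · exact (Cardinal.mk_set_le S).trans
        ((Cardinal.mk_le_of_injective Subtype.val_injective).trans_eq Cardinal.mk_real)
    · calc Cardinal.continuum = 2 ^ Cardinal.aleph0 := Cardinal.two_power_aleph0.symm
        _ = Cardinal.mk (ℕ → Bool) := by
            rw [← Cardinal.mk_bool, ← Cardinal.mk_nat, Cardinal.power_def]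
        _ ≤ Cardinal.mk S := Cardinal.mk_le_of_injective
            (f := fun f => (⟨ι f, hS f⟩ : S))
            (fun f g hfg => hι_inj (congrArg Subtype.val hfg))
  have hX2compl : ∀ f : ℕ → Bool, ι f ∈ X₂ᶜ :=
    fun f hmem => hmem.2 (Or.inl (hιC f))
  have hY2compl : ∀ f : ℕ → Bool, ι f ∈ Y₂ᶜ := by
    rintro f ⟨x, hx, hψx⟩
    exact hx.2 (Or.inr (by rw [mem_preimage, hψx]; exact hιC f))
  -- the equivalences
  have hcard : Nonempty ((X₂ᶜ : Set I01) ≃ (Y₂ᶜ : Set I01)) := by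
    apply Cardinal.eq.mp
    rw [hcardgen _ hX2compl, hcardgen _ hY2compl]
  obtain ⟨e2⟩ := hcard
  have he1bij : Function.Bijective (fun x : X₂ => (⟨ψ x.1, x.1, x.2, rfl⟩ : Y₂)) := by
    constructor
    · intro a b hab
      exact Subtype.ext (hbij.injOn (hsub a.2) (hsub b.2) (congrArg Subtype.val hab))
    · rintro ⟨y, x, hx, rfl⟩
      exact ⟨⟨x, hx⟩, rfl⟩
  set e1 : (X₂ : Set I01) ≃ (Y₂ : Set I01) := Equiv.ofBijective _ he1bij with he1
  have he1val : ∀ x : X₂, (e1 x : I01) = ψ x.1 := fun x => rfl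
  set bigE : I01 ≃ I01 :=
    (Equiv.Set.sumCompl X₂).symm.trans ((e1.sumCongr e2).trans (Equiv.Set.sumCompl Y₂)) with hbigE
  have hφψ : ∀ x ∈ X₂, bigE x = ψ x := by
    intro x hx
    rw [hbigE]
    simp only [Equiv.trans_apply, Equiv.Set.sumCompl_symm_apply_of_mem hx,
      Equiv.sumCongr_apply, Sum.map_inl, Equiv.Set.sumCompl_apply_inl]
    exact he1val ⟨x, hx⟩
  have hφsymm : ∀ y ∈ Y₂, bigE.symm y = χ y := by
    rintro y ⟨x, hx, rfl⟩
    have hχx : χ (ψ x) = x := hinv.1 (hsub hx)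
    rw [Equiv.symm_apply_eq, hχx, hφψ x hx]
  set φ : I01 → I01 := ⇑bigE with hφ
  have hinvφ : Function.invFun φ = ⇑bigE.symm := by
    funext y
    have hsur : ∃ a, φ a = y := ⟨bigE.symm y, bigE.apply_symm_apply y⟩
    have h1' : φ (Function.invFun φ y) = y := Function.invFun_eq hsur
    exact bigE.injective (h1'.trans (bigE.apply_symm_apply y).symm)
  have hMφ : MPhi φ :=
    keyM X Y ψ φ hbij.mapsTo h1 X₂ᶜ hX2c0
      (fun x hx => hφψ x (not_not.mp hx))
  have hMinv : MPhi (Function.invFun φ) := by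
    rw [hinvφ]
    exact keyM Y X χ (⇑bigE.symm) hbijχ.mapsTo h2 Y₂ᶜ hY2c0
      (fun y hy => hφsymm y (not_not.mp hy))
  refine ⟨φ, ⟨bigE.bijective, hMφ, hMinv⟩, ?_⟩
  rw [Filter.EventuallyEq, ae_iff]
  refine measure_mono_null ?_ hX2c0
  intro x hx
  exact fun hmem => hx (hφψ x hmem)
end
end

section
/- For every partition I = A₁ ∪ … ∪ A_k of I into finitely many pairwise disjoint Lebesgue measurable sets, there are a partition I = I₁ ∪ … ∪ I_k into intervals and ψ ∈ Φ₀ such that μ(ψ(A_i) Δ I_i) = 0 for each i ∈ [k]. -/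
open MeasureTheory Set
open scoped symmDiff

noncomputable section

open scoped NNReal ENNReal


namespace GraphonIso

/-- cumulative distribution function of the measure restricted to `B`. -/
def cdf (B : Set ℝ) (x : ℝ) : ℝ := (volume (B ∩ Iic x)).toReal

variable {B : Set ℝ}

lemma vol_inter_ne_top (hB : B ⊆ Icc 0 1) (s : Set ℝ) : volume (B ∩ s) ≠ ⊤ :=
  ((measure_mono (inter_subset_left.trans hB)).trans_lt measure_Icc_lt_top).ne

lemma vol_ne_top (hB : B ⊆ Icc 0 1) : volume B ≠ ⊤ :=
  ((measure_mono hB).trans_lt measure_Icc_lt_top).ne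

lemma cdf_mono (hB : B ⊆ Icc 0 1) : Monotone (cdf B) := fun x y h =>
  ENNReal.toReal_mono (vol_inter_ne_top hB _)
    (measure_mono (inter_subset_inter_right _ (Iic_subset_Iic.2 h)))

lemma cdf_nonneg (x : ℝ) : 0 ≤ cdf B x := ENNReal.toReal_nonneg

lemma cdf_le (hB : B ⊆ Icc 0 1) (x : ℝ) : cdf B x ≤ (volume B).toReal :=
  ENNReal.toReal_mono (vol_ne_top hB) (measure_mono inter_subset_left)

lemma cdf_split (hBm : MeasurableSet B) {x y : ℝ} (h : y ≤ x) :
    volume (B ∩ Iic x) = volume (B ∩ Iic y) + volume (B ∩ Ioc y x) := by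
  rw [← measure_union _ (hBm.inter measurableSet_Ioc)]
  · congr 1
    rw [← inter_union_distrib_left, Iic_union_Ioc_eq_Iic h]
  · exact (Iic_disjoint_Ioc le_rfl).mono inter_subset_right inter_subset_right

lemma cdf_lipschitz (hBm : MeasurableSet B) (hB : B ⊆ Icc 0 1) : LipschitzWith 1 (cdf B) := by
  apply LipschitzWith.of_dist_le_mul
  intro x y
  rw [NNReal.coe_one, one_mul]
  wlog h : y ≤ x generalizing x y
  · rw [dist_comm, dist_comm x y]; exact this _ _ (le_of_not_ge h)
  have h1 : cdf B y ≤ cdf B x := cdf_mono hB h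
  have h2 : cdf B x - cdf B y = (volume (B ∩ Ioc y x)).toReal := by
    rw [cdf, cdf, ← ENNReal.toReal_sub_of_le (measure_mono
      (inter_subset_inter_right _ (Iic_subset_Iic.2 h))) (vol_inter_ne_top hB _), cdf_split hBm h]
    congr 1
    rw [ENNReal.add_sub_cancel_left (vol_inter_ne_top hB _)]
  have h3 : (volume (B ∩ Ioc y x)).toReal ≤ x - y := by
    have := ENNReal.toReal_mono ((measure_Ioc_lt_top (μ := volume)).ne) (measure_mono
      (inter_subset_right : B ∩ Ioc y x ⊆ Ioc y x))
    rwa [Real.volume_Ioc, ENNReal.toReal_ofReal (by linarith)] at this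
  rw [Real.dist_eq, Real.dist_eq, abs_of_nonneg (by linarith), abs_of_nonneg (by linarith)]
  linarith

lemma cdf_continuous (hBm : MeasurableSet B) (hB : B ⊆ Icc 0 1) : Continuous (cdf B) :=
  (cdf_lipschitz hBm hB).continuous

lemma cdf_measurable (hB : B ⊆ Icc 0 1) : Measurable (cdf B) :=
  (cdf_mono hB).measurable

lemma cdf_of_nonpos (hB : B ⊆ Icc 0 1) {x : ℝ} (hx : x ≤ 0) : cdf B x = 0 := by
  have : B ∩ Iic x ⊆ {0} := by
    intro z hz
    have h0 := (hB hz.1).1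
    have h1 : z ≤ 0 := le_trans hz.2 hx
    simp [le_antisymm h1 h0]
  rw [cdf, measure_mono_null this (measure_singleton 0)]
  simp

lemma cdf_one (hB : B ⊆ Icc 0 1) : cdf B 1 = (volume B).toReal := by
  have h : B ∩ Iic 1 = B := inter_eq_self_of_subset_left fun x hx => (hB hx).2
  rw [cdf, h]

/-- Key pushforward identity. -/
lemma cdf_preimage (hBm : MeasurableSet B) (hB : B ⊆ Icc 0 1) {T : Set ℝ}
    (hT : MeasurableSet T) :
    volume (B ∩ cdf B ⁻¹' T) = volume (T ∩ Ioc 0 (volume B).toReal) := by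
  set m := (volume B).toReal with hm
  have hm0 : 0 ≤ m := ENNReal.toReal_nonneg
  have key : ∀ t : ℝ, volume (B ∩ cdf B ⁻¹' (Iic t)) = volume (Iic t ∩ Ioc 0 m) := by
    intro t
    rcases lt_or_ge t 0 with ht | ht
    · have h1 : B ∩ cdf B ⁻¹' (Iic t) = ∅ := by
        ext x
        simp only [mem_inter_iff, mem_preimage, mem_Iic, mem_empty_iff_false, iff_false, not_and]
        intro _ hx
        exact absurd (le_trans (cdf_nonneg x) hx) (not_le.2 ht)
      have h2 : Iic t ∩ Ioc 0 m = ∅ := by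
        apply eq_empty_iff_forall_notMem.2
        rintro x ⟨hx1, hx2, -⟩
        linarith [mem_Iic.1 hx1]
      rw [h1, h2]
    rcases le_or_gt m t with htm | htm
    · have h1 : B ∩ cdf B ⁻¹' (Iic t) = B := by
        apply inter_eq_self_of_subset_left
        intro x _
        exact le_trans (cdf_le hB x) htm
      have h2 : Iic t ∩ Ioc 0 m = Ioc 0 m := by
        apply inter_eq_self_of_subset_right
        intro x hx
        exact le_trans hx.2 htm
      rw [h1, h2, Real.volume_Ioc, sub_zero, hm, ENNReal.ofReal_toReal (vol_ne_top hB)]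
    · -- 0 ≤ t < m
      set S := {x : ℝ | cdf B x ≤ t} with hS
      have hne : (-1 : ℝ) ∈ S := by
        simp only [hS, mem_setOf_eq]
        rw [cdf_of_nonpos hB (by norm_num)]; exact ht
      have hbdd : BddAbove S := by
        refine ⟨1, fun x hx => ?_⟩
        by_contra h
        push_neg at h
        have : m ≤ cdf B x := by rw [hm, ← cdf_one hB]; exact cdf_mono hB h.le
        exact absurd (lt_of_le_of_lt (this.trans hx) htm) (lt_irrefl _)
      have hcl : IsClosed S := isClosed_le (cdf_continuous hBm hB) continuous_const
      set s := sSup S with hs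
      have hsS : s ∈ S := hcl.csSup_mem ⟨-1, hne⟩ hbdd
      have hSeq : S = Iic s := by
        apply Subset.antisymm (fun x hx => le_csSup hbdd hx)
        intro y hy
        exact le_trans (cdf_mono hB hy) hsS
      have hcst : cdf B s = t := by
        refine le_antisymm hsS ?_
        by_contra h
        push_neg at h
        have hopen : IsOpen {x : ℝ | cdf B x < t} :=
          isOpen_lt (cdf_continuous hBm hB) continuous_const
        rcases Metric.isOpen_iff.1 hopen s h with ⟨ε, hε, hball⟩
        have hd : dist (s + ε / 2) s < ε := by
          rw [Real.dist_eq, add_sub_cancel_left, abs_of_nonneg (by linarith : (0:ℝ) ≤ ε/2)]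
          linarith
        have hmem : cdf B (s + ε / 2) < t := hball hd
        have := le_csSup hbdd hmem.le
        linarith
      have h1 : B ∩ cdf B ⁻¹' (Iic t) = B ∩ Iic s := by
        rw [show cdf B ⁻¹' (Iic t) = S from rfl, hSeq]
      rw [h1]
      have h2 : volume (B ∩ Iic s) = ENNReal.ofReal t := by
        rw [← hcst, cdf, ENNReal.ofReal_toReal (vol_inter_ne_top hB _)]
      rw [h2, inter_comm, Ioc_inter_Iic, min_eq_right htm.le, Real.volume_Ioc, sub_zero]
  -- extend to all measurable T via ext_of_Iic
  haveI hfin : IsFiniteMeasure (Measure.map (cdf B) (volume.restrict B)) := by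
    constructor
    rw [Measure.map_apply (cdf_measurable hB) MeasurableSet.univ, preimage_univ,
      Measure.restrict_apply MeasurableSet.univ, univ_inter]
    exact (vol_ne_top hB).lt_top
  have hext : Measure.map (cdf B) (volume.restrict B) = volume.restrict (Ioc 0 m) := by
    apply MeasureTheory.Measure.ext_of_Iic
    intro a
    rw [Measure.map_apply (cdf_measurable hB) measurableSet_Iic,
      Measure.restrict_apply (cdf_measurable hB measurableSet_Iic),
      Measure.restrict_apply measurableSet_Iic, inter_comm (cdf B ⁻¹' Iic a) B]
    exact key a
  have := congrArg (fun μ : Measure ℝ => μ T) hext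
  simpa [Measure.map_apply (cdf_measurable hB) hT,
    Measure.restrict_apply (cdf_measurable hB hT), Measure.restrict_apply hT,
    inter_comm (cdf B ⁻¹' T) B] using this

/-- Plateau set of the cdf. -/
def plat (B : Set ℝ) : Set ℝ := {x | ∃ y, y < x ∧ cdf B y = cdf B x}

lemma plat_eq (hB : B ⊆ Icc 0 1) :
    plat B = ⋃ q : ℚ, (Ioi (q : ℝ) ∩ cdf B ⁻¹' {cdf B q}) := by
  ext x
  constructor
  · rintro ⟨y, hyx, hy⟩
    obtain ⟨q, hq1, hq2⟩ := exists_rat_btwn hyx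
    refine mem_iUnion.2 ⟨q, hq2, ?_⟩
    have h1 : cdf B y ≤ cdf B q := cdf_mono hB hq1.le
    have h2 : cdf B q ≤ cdf B x := cdf_mono hB hq2.le
    simp only [mem_singleton_iff, mem_preimage]
    rw [hy] at h1
    exact le_antisymm h1 h2
  · intro hx
    obtain ⟨q, hq, h⟩ := mem_iUnion.1 hx
    exact ⟨(q : ℝ), hq, (mem_singleton_iff.1 (mem_preimage.1 h)).symm⟩

lemma plat_measurable (hB : B ⊆ Icc 0 1) : MeasurableSet (plat B) := by
  rw [plat_eq hB]
  exact MeasurableSet.iUnion fun q =>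
    measurableSet_Ioi.inter (cdf_measurable hB (measurableSet_singleton _))

lemma plat_null (hBm : MeasurableSet B) (hB : B ⊆ Icc 0 1) : volume (B ∩ plat B) = 0 := by
  rw [plat_eq hB, inter_iUnion]
  apply measure_iUnion_null
  intro q
  rcases le_or_gt (q : ℝ) 1 with hq1 | hq1
  · set W := {x : ℝ | (q : ℝ) ≤ x ∧ x ≤ 1 ∧ cdf B x ≤ cdf B q} with hW
    have hWcl : IsClosed W := by
      apply IsClosed.inter (isClosed_le continuous_const continuous_id)
      exact IsClosed.inter (isClosed_le continuous_id continuous_const)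
        (isClosed_le (cdf_continuous hBm hB) continuous_const)
    have hWne : (q : ℝ) ∈ W := ⟨le_rfl, hq1, le_rfl⟩
    have hWbdd : BddAbove W := ⟨1, fun x hx => hx.2.1⟩
    set s := sSup W with hs
    have hsW : s ∈ W := hWcl.csSup_mem ⟨_, hWne⟩ hWbdd
    have hqs : (q : ℝ) ≤ s := le_csSup hWbdd hWne
    have hcs : cdf B s = cdf B q := le_antisymm hsW.2.2 (cdf_mono hB hqs)
    have hsub : B ∩ (Ioi (q : ℝ) ∩ cdf B ⁻¹' {cdf B q}) ⊆ B ∩ Ioc (q : ℝ) s := by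
      rintro x ⟨hxB, hx1, hx2⟩
      refine ⟨hxB, hx1, ?_⟩
      have : x ∈ W := ⟨(le_of_lt hx1), (hB hxB).2, le_of_eq (mem_singleton_iff.1 hx2)⟩
      exact le_csSup hWbdd this
    apply measure_mono_null hsub
    have hmeq : volume (B ∩ Iic s) = volume (B ∩ Iic (q : ℝ)) := by
      have := congrArg ENNReal.ofReal hcs
      rwa [cdf, cdf, ENNReal.ofReal_toReal (vol_inter_ne_top hB _),
        ENNReal.ofReal_toReal (vol_inter_ne_top hB _)] at this
    have h3 : volume (B ∩ Iic (q : ℝ)) + volume (B ∩ Ioc (q : ℝ) s)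
        = volume (B ∩ Iic (q : ℝ)) + 0 := by
      rw [add_zero, ← cdf_split hBm hqs, hmeq]
    exact (ENNReal.add_right_inj (vol_inter_ne_top hB _)).1 h3
  · apply measure_mono_null (t := (∅ : Set ℝ)) _ measure_empty
    rintro x ⟨hxB, hx1, -⟩
    exact absurd ((hB hxB).2.trans_lt hq1) (not_lt.2 (le_of_lt hx1))

lemma cdf_injOn (hB : B ⊆ Icc 0 1) : InjOn (cdf B) (B \ plat B) := by
  intro x hx y hy hxy
  rcases lt_trichotomy x y with h | h | h
  · exact absurd (⟨x, h, hxy⟩ : y ∈ plat B) hy.2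
  · exact h
  · exact absurd (⟨y, h, hxy.symm⟩ : x ∈ plat B) hx.2

lemma mem_plat_of_cdf_eq_zero (hB : B ⊆ Icc 0 1) {x : ℝ} (hx : x ∈ B) (h : cdf B x = 0) :
    x ∈ plat B := by
  have h0 : x ≤ 1 := (hB hx).2
  exact ⟨x - 1, by linarith, by rw [cdf_of_nonpos hB (by linarith : x - 1 ≤ 0), h]⟩

lemma cdf_image_null (hBm : MeasurableSet B) (hB : B ⊆ Icc 0 1) {Z : Set ℝ}
    (hZ : volume Z = 0) : volume (cdf B '' Z) = 0 := by
  have h := (cdf_lipschitz hBm hB).hausdorffMeasure_image_le zero_le_one Z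
  rw [MeasureTheory.hausdorffMeasure_real] at h
  refine le_antisymm ?_ zero_le
  calc volume (cdf B '' Z) ≤ ((1 : ℝ≥0) : ℝ≥0∞) ^ (1 : ℝ) * volume Z := h
    _ = 0 := by rw [hZ, mul_zero]

lemma cdf_image_measurable (hBm : MeasurableSet B) (hB : B ⊆ Icc 0 1) {S : Set ℝ}
    (hS : MeasurableSet S) (hsub : S ⊆ B \ plat B) : MeasurableSet (cdf B '' S) :=
  hS.image_of_continuousOn_injOn (cdf_continuous hBm hB).continuousOn
    ((cdf_injOn hB).mono hsub)

lemma cdf_image_volume (hBm : MeasurableSet B) (hB : B ⊆ Icc 0 1) {S : Set ℝ}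
    (hS : MeasurableSet S) (hsub : S ⊆ B \ plat B) :
    volume (cdf B '' S) = volume S := by
  set T := cdf B '' S with hT
  have hTm : MeasurableSet T := cdf_image_measurable hBm hB hS hsub
  have h1 : volume (B ∩ cdf B ⁻¹' T) = volume (T ∩ Ioc 0 (volume B).toReal) :=
    cdf_preimage hBm hB hTm
  have h2 : S ⊆ B ∩ cdf B ⁻¹' T := fun x hx => ⟨(hsub hx).1, mem_image_of_mem _ hx⟩
  have h3 : B ∩ cdf B ⁻¹' T ⊆ S ∪ (B ∩ plat B) := by
    rintro x ⟨hxB, hxT⟩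
    obtain ⟨x', hx'S, hx'⟩ := hxT
    by_cases hp : x ∈ plat B
    · exact Or.inr ⟨hxB, hp⟩
    · left
      have : x = x' := cdf_injOn hB ⟨hxB, hp⟩ (hsub hx'S) hx'.symm
      rwa [this]
  have h4 : volume (B ∩ cdf B ⁻¹' T) = volume S := by
    apply le_antisymm
    · calc volume (B ∩ cdf B ⁻¹' T) ≤ volume (S ∪ B ∩ plat B) := measure_mono h3
        _ ≤ volume S + volume (B ∩ plat B) := measure_union_le _ _
        _ = volume S := by rw [plat_null hBm hB, add_zero]
    · exact measure_mono h2
  have h5 : volume (T ∩ Ioc 0 (volume B).toReal) = volume T := by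
    apply le_antisymm (measure_mono inter_subset_left)
    have hsub2 : T ⊆ (T ∩ Ioc 0 (volume B).toReal) ∪ {0} := by
      rintro t ⟨x', hx'S, rfl⟩
      rcases le_or_gt (cdf B x') 0 with h0 | h0
      · right
        simp [le_antisymm h0 (cdf_nonneg x')]
      · left
        exact ⟨mem_image_of_mem _ hx'S, h0, cdf_le hB x'⟩
    calc volume T ≤ volume ((T ∩ Ioc 0 (volume B).toReal) ∪ {0}) := measure_mono hsub2
      _ ≤ volume (T ∩ Ioc 0 (volume B).toReal) + volume {0} := measure_union_le _ _
      _ = volume (T ∩ Ioc 0 (volume B).toReal) := by rw [Real.volume_singleton, add_zero]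
  rw [← h5, ← h1, h4]

section Global

variable {k : ℕ} (B : Fin k → Set ℝ)

/-- cumulative sums of measures. -/
def cums (n : ℕ) : ℝ :=
  ∑ j ∈ Finset.univ.filter (fun j : Fin k => (j : ℕ) < n), (volume (B j)).toReal

lemma cums_mono : Monotone (cums B) := by
  intro a b hab
  apply Finset.sum_le_sum_of_subset_of_nonneg
  · intro j hj
    simp only [Finset.mem_filter, Finset.mem_univ, true_and] at *
    exact lt_of_lt_of_le hj hab
  · intro _ _ _
    exact ENNReal.toReal_nonneg

lemma cums_zero : cums B 0 = 0 := by
  simp [cums]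

lemma cums_nonneg (n : ℕ) : 0 ≤ cums B n := by
  rw [← cums_zero (B := B)]
  exact cums_mono B (Nat.zero_le n)

lemma cums_succ (i : Fin k) : cums B ((i : ℕ) + 1) = cums B i + (volume (B i)).toReal := by
  have h : Finset.univ.filter (fun j : Fin k => (j : ℕ) < (i : ℕ) + 1)
      = insert i (Finset.univ.filter (fun j : Fin k => (j : ℕ) < (i : ℕ))) := by
    ext j
    simp only [Finset.mem_filter, Finset.mem_univ, true_and, Finset.mem_insert,
      Nat.lt_succ_iff_lt_or_eq]
    rw [or_comm]
    constructor
    · rintro (h | h)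
      · left; exact Fin.ext h
      · right; exact h
    · rintro (h | h)
      · left; exact congrArg _ h
      · right; exact h
  rw [cums, h, Finset.sum_insert (by simp), cums, add_comm]

variable (hBm : ∀ i, MeasurableSet (B i)) (hBsub : ∀ i, B i ⊆ Icc 0 1)
  (hBdisj : ∀ i j : Fin k, i ≠ j → Disjoint (B i) (B j))
  (hBcover : (⋃ i, B i) = Icc (0:ℝ) 1)

include hBm hBsub hBdisj hBcover in
lemma cums_k : cums B k = 1 := by
  have h1 : Finset.univ.filter (fun j : Fin k => (j : ℕ) < k) = Finset.univ := by
    ext j; simp [j.isLt]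
  have h2 : volume (⋃ i, B i) = ∑ i, volume (B i) := by
    rw [measure_iUnion (fun i j hij => hBdisj i j hij) hBm, tsum_fintype]
  rw [cums, h1, ← ENNReal.toReal_sum (fun a _ => vol_ne_top (hBsub a)), ← h2, hBcover,
    Real.volume_Icc]
  norm_num

/-- the rearranging map. -/
def pf : ℝ → ℝ := fun x => ∑ i, (B i).indicator (fun y => cums B i + cdf (B i) y) x

include hBdisj in
lemma pf_eq {x : ℝ} {i : Fin k} (hx : x ∈ B i) : pf B x = cums B i + cdf (B i) x := by
  rw [pf, Finset.sum_eq_single i]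
  · exact indicator_of_mem hx _
  · intro j _ hji
    apply indicator_of_notMem
    exact fun hxj => (hBdisj j i hji).ne_of_mem hxj hx rfl
  · intro h
    exact absurd (Finset.mem_univ i) h

include hBm hBsub in
lemma pf_measurable : Measurable (pf B) := by
  apply Finset.measurable_sum
  intro i _
  exact (measurable_const.add (cdf_measurable (hBsub i))).indicator (hBm i)

include hBdisj hBsub in
lemma pf_mem {x : ℝ} {i : Fin k} (hx : x ∈ B i) :
    pf B x ∈ Icc (cums B i) (cums B ((i : ℕ) + 1)) := by
  rw [pf_eq B hBdisj hx, cums_succ]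
  exact ⟨le_add_of_nonneg_right (cdf_nonneg x), add_le_add_right (cdf_le (hBsub i) x) _⟩

include hBm hBsub hBdisj hBcover in
lemma pf_mem01 {x : ℝ} (hx : x ∈ Icc (0:ℝ) 1) : pf B x ∈ Icc (0:ℝ) 1 := by
  rw [← hBcover] at hx
  obtain ⟨i, hi⟩ := mem_iUnion.1 hx
  have h := pf_mem B hBsub hBdisj hi
  constructor
  · exact le_trans (cums_nonneg B i) h.1
  · refine le_trans h.2 ?_
    rw [← cums_k B hBm hBsub hBdisj hBcover]
    exact cums_mono B i.isLt

/-- the global bad (non-injectivity) set. -/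
def badN : Set ℝ := ⋃ i, B i ∩ plat (B i)

include hBm hBsub in
lemma badN_measurable : MeasurableSet (badN B) :=
  MeasurableSet.iUnion fun i => (hBm i).inter (plat_measurable (hBsub i))

include hBm hBsub in
lemma badN_null : volume (badN B) = 0 :=
  measure_iUnion_null fun i => plat_null (hBm i) (hBsub i)

include hBsub in
lemma badN_subset : badN B ⊆ Icc 0 1 := by
  rintro x hx
  obtain ⟨i, hi, -⟩ := mem_iUnion.1 hx
  exact hBsub i hi

include hBm hBsub hBdisj hBcover in
lemma pf_injOn : InjOn (pf B) (Icc 0 1 \ badN B) := by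
  have aux : ∀ (i j : Fin k) (x y : ℝ), (i : ℕ) < (j : ℕ) → x ∈ B i → y ∈ B j →
      y ∉ badN B → pf B x = pf B y → False := by
    intro i j x y hij hx hy hyN hpf
    have h1 : pf B x ≤ cums B ((i : ℕ) + 1) := (pf_mem B hBsub hBdisj hx).2
    have h2 : cums B ((i : ℕ) + 1) ≤ cums B j := cums_mono B hij
    have h3 : cums B j + cdf (B j) y = pf B x := (pf_eq B hBdisj hy).symm.trans hpf.symm
    have h4 : cdf (B j) y ≤ 0 := by linarith
    have h5 : cdf (B j) y = 0 := le_antisymm h4 (cdf_nonneg y)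
    exact hyN (mem_iUnion.2 ⟨j, hy, mem_plat_of_cdf_eq_zero (hBsub j) hy h5⟩)
  intro x hx y hy hxy
  have hxI := hx.1
  have hyI := hy.1
  rw [← hBcover] at hxI hyI
  obtain ⟨i, hi⟩ := mem_iUnion.1 hxI
  obtain ⟨j, hj⟩ := mem_iUnion.1 hyI
  rcases lt_trichotomy (i : ℕ) (j : ℕ) with h | h | h
  · exact absurd hxy (fun hpf => aux i j x y h hi hj hy.2 hpf)
  · have hije : i = j := Fin.ext h
    subst hije
    rw [pf_eq B hBdisj hi, pf_eq B hBdisj hj] at hxy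
    have hxy' : cdf (B i) x = cdf (B i) y := by linarith
    refine cdf_injOn (hBsub i) ⟨hi, ?_⟩ ⟨hj, ?_⟩ hxy'
    · exact fun hp => hx.2 (mem_iUnion.2 ⟨i, hi, hp⟩)
    · exact fun hp => hy.2 (mem_iUnion.2 ⟨i, hj, hp⟩)
  · exact absurd hxy.symm (fun hpf => aux j i y x h hj hi hx.2 hpf)

include hBm hBsub hBdisj hBcover in
lemma pf_preimage {T : Set ℝ} (hT : MeasurableSet T) :
    volume (Icc 0 1 ∩ pf B ⁻¹' T) = volume (T ∩ Icc 0 1) := by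
  have hsplit : Icc 0 1 ∩ pf B ⁻¹' T = ⋃ i, (B i ∩ pf B ⁻¹' T) := by
    rw [← hBcover, iUnion_inter]
  rw [hsplit, measure_iUnion (fun i j hij => ((hBdisj i j hij).mono inter_subset_left
    inter_subset_left)) (fun i => (hBm i).inter (pf_measurable B hBm hBsub hT)), tsum_fintype]
  have hterm : ∀ i : Fin k, volume (B i ∩ pf B ⁻¹' T)
      = volume (T ∩ Ioc (cums B i) (cums B ((i : ℕ) + 1))) := by
    intro i
    have h1 : B i ∩ pf B ⁻¹' T = B i ∩ cdf (B i) ⁻¹' ((fun y => cums B i + y) ⁻¹' T) := by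
      ext x
      simp only [mem_inter_iff, mem_preimage, and_congr_right_iff]
      intro hx
      rw [pf_eq B hBdisj hx]
    have h2 : MeasurableSet ((fun y => cums B i + y) ⁻¹' T) :=
      (measurable_const_add _) hT
    rw [h1, cdf_preimage (hBm i) (hBsub i) h2]
    have h3 : (fun y => cums B i + y) ⁻¹' T ∩ Ioc 0 (volume (B i)).toReal
        = (fun y => cums B i + y) ⁻¹' (T ∩ Ioc (cums B i) (cums B ((i : ℕ) + 1))) := by
      ext y
      simp only [mem_inter_iff, mem_preimage, mem_Ioc, cums_succ]
      constructor
      · rintro ⟨h4, h5, h6⟩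
        exact ⟨h4, by linarith, by linarith⟩
      · rintro ⟨h4, h5, h6⟩
        exact ⟨h4, by linarith, by linarith⟩
    rw [h3, measure_preimage_add]
  rw [Finset.sum_congr rfl (fun i _ => hterm i)]
  have main : ∀ n : ℕ, n ≤ k →
      ∑ i ∈ Finset.univ.filter (fun i : Fin k => (i : ℕ) < n),
        volume (T ∩ Ioc (cums B i) (cums B ((i : ℕ) + 1)))
      = volume (T ∩ Ioc 0 (cums B n)) := by
    intro n
    induction n with
    | zero =>
      intro _
      rw [cums_zero]
      simp
    | succ n ih =>
      intro hn
      have hnk : n < k := hn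
      have hstep : Finset.univ.filter (fun j : Fin k => (j : ℕ) < n + 1)
          = insert (⟨n, hnk⟩ : Fin k) (Finset.univ.filter (fun j : Fin k => (j : ℕ) < n)) := by
        ext j
        simp only [Finset.mem_filter, Finset.mem_univ, true_and, Finset.mem_insert,
          Nat.lt_succ_iff_lt_or_eq]
        rw [or_comm]
        constructor
        · rintro (h | h)
          · left; exact Fin.ext h
          · right; exact h
        · rintro (h | h)
          · left; rw [h]
          · right; exact h
      rw [hstep, Finset.sum_insert (by simp), ih (le_of_lt hnk), add_comm]
      have hd : Disjoint (T ∩ Ioc 0 (cums B n)) (T ∩ Ioc (cums B n) (cums B (n + 1))) :=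
        (Set.Ioc_disjoint_Ioc_of_le le_rfl).mono inter_subset_right inter_subset_right
      rw [← measure_union hd ((hT.inter measurableSet_Ioc)), ← inter_union_distrib_left,
        Ioc_union_Ioc_eq_Ioc (cums_nonneg B n) (cums_mono B (Nat.le_succ n))]
  have := main k le_rfl
  have huniv : Finset.univ.filter (fun i : Fin k => (i : ℕ) < k) = Finset.univ := by
    ext j; simp [j.isLt]
  rw [huniv] at this
  rw [this, cums_k B hBm hBsub hBdisj hBcover]
  apply le_antisymm
  · exact measure_mono (inter_subset_inter_right _ Ioc_subset_Icc_self)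
  · have hs1 : T ∩ Icc 0 1 ⊆ (T ∩ Ioc 0 1) ∪ {0} := by
      rintro x ⟨hxT, hx0, hx1⟩
      rcases eq_or_lt_of_le hx0 with h | h
      · right; simp [← h]
      · left; exact ⟨hxT, h, hx1⟩
    refine le_trans (measure_mono hs1) (le_trans (measure_union_le _ _) ?_)
    rw [Real.volume_singleton, add_zero]

lemma shift_image (c : ℝ) (X : Set ℝ) : (fun y => c + y) '' X = (fun y => y - c) ⁻¹' X := by
  ext y
  constructor
  · rintro ⟨x, hx, rfl⟩
    simpa using hx
  · intro hy
    exact ⟨y - c, hy, by ring⟩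

lemma shift_vol (c : ℝ) (X : Set ℝ) : volume ((fun y => c + y) '' X) = volume X := by
  rw [shift_image]
  have : (fun y : ℝ => y - c) = (fun y : ℝ => y + (-c)) := by funext y; ring
  rw [this, measure_preimage_add_right]

include hBm hBsub hBdisj hBcover in
lemma pf_image_eq {S : Set ℝ} (hsub : S ⊆ Icc 0 1 \ badN B) :
    pf B '' S = ⋃ i : Fin k, (fun y => cums B i + y) '' (cdf (B i) '' (S ∩ B i)) := by
  ext z
  constructor
  · rintro ⟨x, hxS, rfl⟩
    have : x ∈ ⋃ i, B i := by rw [hBcover]; exact (hsub hxS).1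
    obtain ⟨i, hi⟩ := mem_iUnion.1 this
    exact mem_iUnion.2 ⟨i, ⟨cdf (B i) x, mem_image_of_mem _ ⟨hxS, hi⟩, (pf_eq B hBdisj hi).symm⟩⟩
  · intro hz
    obtain ⟨i, y, ⟨x, hx, rfl⟩, rfl⟩ := mem_iUnion.1 hz
    exact ⟨x, hx.1, pf_eq B hBdisj hx.2⟩

include hBm hBsub hBdisj hBcover in
lemma pf_image_piece_meas {S : Set ℝ} (hS : MeasurableSet S) (hsub : S ⊆ Icc 0 1 \ badN B)
    (i : Fin k) : MeasurableSet ((fun y => cums B i + y) '' (cdf (B i) '' (S ∩ B i))) := by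
  rw [shift_image]
  apply (measurable_id.sub_const _)
  apply cdf_image_measurable (hBm i) (hBsub i) (hS.inter (hBm i))
  rintro x ⟨hxS, hxB⟩
  exact ⟨hxB, fun hp => (hsub hxS).2 (mem_iUnion.2 ⟨i, hxB, hp⟩)⟩

include hBm hBsub hBdisj hBcover in
lemma pf_image_meas {S : Set ℝ} (hS : MeasurableSet S) (hsub : S ⊆ Icc 0 1 \ badN B) :
    MeasurableSet (pf B '' S) := by
  rw [pf_image_eq B hBm hBsub hBdisj hBcover hsub]
  exact MeasurableSet.iUnion fun i => pf_image_piece_meas B hBm hBsub hBdisj hBcover hS hsub i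

include hBm hBsub hBdisj hBcover in
lemma pf_image_vol {S : Set ℝ} (hS : MeasurableSet S) (hsub : S ⊆ Icc 0 1 \ badN B) :
    volume (pf B '' S) = volume S := by
  rw [pf_image_eq B hBm hBsub hBdisj hBcover hsub]
  have hpm : ∀ i : Fin k, S ∩ B i ⊆ B i \ plat (B i) := by
    intro i
    rintro x ⟨hxS, hxB⟩
    exact ⟨hxB, fun hp => (hsub hxS).2 (mem_iUnion.2 ⟨i, hxB, hp⟩)⟩
  have hv : ∀ i : Fin k, volume ((fun y => cums B i + y) '' (cdf (B i) '' (S ∩ B i)))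
      = volume (S ∩ B i) := by
    intro i
    rw [shift_vol, cdf_image_volume (hBm i) (hBsub i) (hS.inter (hBm i)) (hpm i)]
  have hbound : ∀ i : Fin k, (fun y => cums B i + y) '' (cdf (B i) '' (S ∩ B i))
      ⊆ Icc (cums B i) (cums B ((i : ℕ) + 1)) := by
    rintro i z ⟨y, ⟨x, hx, rfl⟩, rfl⟩
    rw [cums_succ]
    exact ⟨le_add_of_nonneg_right (cdf_nonneg x), add_le_add_right (cdf_le (hBsub i) x) _⟩
  have hae : Pairwise (Function.onFun (MeasureTheory.AEDisjoint volume)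
      (fun i : Fin k => (fun y => cums B i + y) '' (cdf (B i) '' (S ∩ B i)))) := by
    intro i j hij
    have key : ∀ a b : Fin k, (a : ℕ) < (b : ℕ) →
        volume ((fun y => cums B a + y) '' (cdf (B a) '' (S ∩ B a))
          ∩ (fun y => cums B b + y) '' (cdf (B b) '' (S ∩ B b))) = 0 := by
      intro a b hab
      apply measure_mono_null (t := {cums B b})
      · rintro z ⟨hza, hzb⟩
        have h1 := hbound a hza
        have h2 := hbound b hzb
        have h3 : cums B ((a : ℕ) + 1) ≤ cums B b := cums_mono B hab
        have : z = cums B b := le_antisymm (h1.2.trans h3) h2.1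
        simp [this]
      · exact measure_singleton _
    rcases lt_or_gt_of_ne (fun h : (i : ℕ) = (j : ℕ) => hij (Fin.ext h)) with h | h
    · exact key i j h
    · exact MeasureTheory.AEDisjoint.symm (key j i h)
  rw [measure_iUnion₀ hae (fun i =>
    (pf_image_piece_meas B hBm hBsub hBdisj hBcover hS hsub i).nullMeasurableSet), tsum_fintype]
  rw [Finset.sum_congr rfl (fun i _ => hv i)]
  rw [← tsum_fintype (L := SummationFilter.unconditional _), ← measure_iUnion (fun i j hij => (hBdisj i j hij).mono inter_subset_right
    inter_subset_right) (fun i => hS.inter (hBm i)), ← inter_iUnion, hBcover,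
    inter_eq_self_of_subset_left (fun x hx => (hsub hx).1)]

include hBm hBsub hBdisj hBcover in
lemma pf_image_null {Z : Set ℝ} (hZ : volume Z = 0) (hZs : Z ⊆ Icc 0 1) :
    volume (pf B '' Z) = 0 := by
  have hsub : pf B '' Z ⊆ ⋃ i : Fin k, (fun y => cums B i + y) '' (cdf (B i) '' (Z ∩ B i)) := by
    rintro z ⟨x, hxZ, rfl⟩
    have : x ∈ ⋃ i, B i := by rw [hBcover]; exact hZs hxZ
    obtain ⟨i, hi⟩ := mem_iUnion.1 this
    exact mem_iUnion.2 ⟨i, ⟨cdf (B i) x, mem_image_of_mem _ ⟨hxZ, hi⟩, (pf_eq B hBdisj hi).symm⟩⟩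
  apply measure_mono_null hsub
  apply measure_iUnion_null
  intro i
  rw [shift_vol]
  exact cdf_image_null (hBm i) (hBsub i) (measure_mono_null inter_subset_left hZ)

end Global
section Cantor

open Cardinal in
lemma two_thirds_cantorFunction_mem (f : ℕ → Bool) :
    2 / 3 * Cardinal.cantorFunction (1 / 3) f ∈ cantorSet := by
  have h1 : (0 : ℝ) ≤ 1 / 3 := by norm_num
  have h2 : (1 : ℝ) / 3 < 1 := by norm_num
  have hmemIcc : ∀ g : ℕ → Bool, 2 / 3 * Cardinal.cantorFunction (1 / 3) g ∈ Icc (0:ℝ) 1 := by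
    intro g
    constructor
    · apply mul_nonneg (by norm_num)
      exact tsum_nonneg fun n => Cardinal.cantorFunctionAux_nonneg h1
    · have hle : Cardinal.cantorFunction (1 / 3) g
          ≤ Cardinal.cantorFunction (1 / 3) (fun _ => true) :=
        Cardinal.cantorFunction_le h1 h2 fun n _ => rfl
      have htrue : Cardinal.cantorFunction (1 / 3) (fun _ => true) = 3 / 2 := by
        have heq : (fun n => Cardinal.cantorFunctionAux (1/3) (fun _ => true) n)
            = fun n => (1/3 : ℝ) ^ n := by
          funext n
          exact Cardinal.cantorFunctionAux_true rfl
        rw [Cardinal.cantorFunction, heq, tsum_geometric_of_lt_one h1 h2]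
        norm_num
      rw [htrue] at hle
      linarith
  have key : ∀ n : ℕ, ∀ g : ℕ → Bool,
      2 / 3 * Cardinal.cantorFunction (1 / 3) g ∈ preCantorSet n := by
    intro n
    induction n with
    | zero => intro g; exact hmemIcc g
    | succ n ih =>
      intro g
      have hsucc := Cardinal.cantorFunction_succ g h1 h2
      cases hg : g 0 with
      | false =>
        rw [hg] at hsucc
        simp only [Bool.cond_false] at hsucc
        left
        refine ⟨2 / 3 * Cardinal.cantorFunction (1/3) (fun n => g (n+1)), ih _, ?_⟩
        rw [hsucc]
        ring
      | true =>
        rw [hg] at hsucc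
        simp only [Bool.cond_true] at hsucc
        right
        refine ⟨2 / 3 * Cardinal.cantorFunction (1/3) (fun n => g (n+1)), ih _, ?_⟩
        rw [hsucc]
        ring
  exact Set.mem_iInter.2 fun n => key n f

lemma continuum_le_mk_cantorSet : Cardinal.continuum ≤ Cardinal.mk cantorSet := by
  have hinj : Function.Injective
      (fun f : ℕ → Bool => (⟨2 / 3 * Cardinal.cantorFunction (1 / 3) f,
        two_thirds_cantorFunction_mem f⟩ : cantorSet)) := by
    intro f g hfg
    have h := congrArg (fun x : cantorSet => (x : ℝ)) hfg
    simp only at h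
    have h2 : Cardinal.cantorFunction (1 / 3) f = Cardinal.cantorFunction (1 / 3) g := by
      field_simp at h
      exact h
    exact Cardinal.cantorFunction_injective (by norm_num) (by norm_num) h2
  have := Cardinal.mk_le_of_injective hinj
  rwa [← Cardinal.power_def, Cardinal.mk_bool, Cardinal.mk_nat,
    Cardinal.two_power_aleph0] at this

lemma measurableSet_cantorSet : MeasurableSet cantorSet :=
  isClosed_cantorSet.measurableSet

lemma volume_preCantorSet_le (n : ℕ) :
    volume (preCantorSet n) ≤ ENNReal.ofReal ((2 / 3 : ℝ) ^ n) := by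
  induction n with
  | zero =>
    simp only [preCantorSet_zero, pow_zero]
    rw [Real.volume_Icc]
    norm_num
  | succ n ih =>
    have hmeas : MeasurableSet (preCantorSet n) := (isClosed_preCantorSet n).measurableSet
    have hm2 : Measurable (fun z : ℝ => z - 2) := by fun_prop
    have hpre1 : (· / 3) '' preCantorSet n = (fun x : ℝ => 3 * x) ⁻¹' preCantorSet n := by
      ext y
      constructor
      · rintro ⟨x, hx, rfl⟩
        have h : 3 * (x / 3) = x := by ring
        show 3 * (x / 3) ∈ preCantorSet n
        rw [h]; exact hx
      · intro hy
        exact ⟨3 * y, hy, by ring⟩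
    have hpre2 : (fun x : ℝ => (2 + x) / 3) '' preCantorSet n
        = (fun y : ℝ => 3 * y) ⁻¹' ((fun z : ℝ => z - 2) ⁻¹' preCantorSet n) := by
      ext y
      constructor
      · rintro ⟨x, hx, rfl⟩
        have h : 3 * ((2 + x) / 3) - 2 = x := by ring
        show 3 * ((2 + x) / 3) - 2 ∈ preCantorSet n
        rw [h]; exact hx
      · intro hy
        exact ⟨3 * y - 2, hy, by ring⟩
    have hvol3 : ∀ W : Set ℝ, MeasurableSet W →
        volume ((fun y : ℝ => 3 * y) ⁻¹' W) = ENNReal.ofReal (1/3 : ℝ) * volume W := by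
      intro W hW
      have hmap := Real.map_volume_mul_left (show (3:ℝ) ≠ 0 by norm_num)
      have happ := congrArg (fun μ : MeasureTheory.Measure ℝ => μ W) hmap
      simp only [MeasureTheory.Measure.smul_apply, smul_eq_mul] at happ
      rw [MeasureTheory.Measure.map_apply (measurable_const_mul 3) hW] at happ
      rw [happ]
      congr 1
      rw [abs_of_nonneg (by norm_num : (0:ℝ) ≤ (3:ℝ)⁻¹)]
      norm_num
    have hsub : volume ((fun z : ℝ => z - 2) ⁻¹' preCantorSet n) = volume (preCantorSet n) := by
      have h : (fun z : ℝ => z - 2) = (fun z : ℝ => z + (-2)) := by funext z; ring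
      rw [h, measure_preimage_add_right]
    have hb1 : volume ((· / 3) '' preCantorSet n)
        ≤ ENNReal.ofReal (1 / 3 * (2 / 3 : ℝ) ^ n) := by
      rw [hpre1, hvol3 _ hmeas, ENNReal.ofReal_mul (by norm_num : (0:ℝ) ≤ 1/3)]
      exact mul_le_mul' le_rfl ih
    have hb2 : volume ((fun x : ℝ => (2 + x) / 3) '' preCantorSet n)
        ≤ ENNReal.ofReal (1 / 3 * (2 / 3 : ℝ) ^ n) := by
      rw [hpre2, hvol3 _ (hm2 hmeas), hsub,
        ENNReal.ofReal_mul (by norm_num : (0:ℝ) ≤ 1/3)]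
      exact mul_le_mul' le_rfl ih
    calc volume (preCantorSet (n + 1))
        ≤ volume ((· / 3) '' preCantorSet n)
          + volume ((fun x : ℝ => (2 + x) / 3) '' preCantorSet n) := by
          rw [preCantorSet_succ]
          exact measure_union_le _ _
      _ ≤ ENNReal.ofReal (1 / 3 * (2 / 3 : ℝ) ^ n) + ENNReal.ofReal (1 / 3 * (2 / 3 : ℝ) ^ n) :=
          add_le_add hb1 hb2
      _ = ENNReal.ofReal ((2 / 3 : ℝ) ^ (n + 1)) := by
          rw [← ENNReal.ofReal_add (by positivity) (by positivity)]
          congr 1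
          ring

lemma volume_cantorSet : volume cantorSet = 0 := by
  have hbound : ∀ n : ℕ, volume cantorSet ≤ ENNReal.ofReal ((2 / 3 : ℝ) ^ n) := fun n =>
    le_trans (measure_mono (Set.iInter_subset _ n)) (volume_preCantorSet_le n)
  have htend : Filter.Tendsto (fun n : ℕ => ENNReal.ofReal ((2 / 3 : ℝ) ^ n))
      Filter.atTop (nhds 0) := by
    rw [← ENNReal.ofReal_zero]
    exact ENNReal.tendsto_ofReal
      (tendsto_pow_atTop_nhds_zero_of_lt_one (by norm_num) (by norm_num))
  exact le_antisymm (ge_of_tendsto' htend hbound) zero_le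

end Cantor
section I01

lemma I01_me : MeasurableEmbedding (Subtype.val : unitInterval → ℝ) :=
  MeasurableEmbedding.subtype_coe measurableSet_Icc

lemma I01_vol (t : Set unitInterval) : volume t = volume (Subtype.val '' t) := by
  rw [unitInterval.volume_def, I01_me.comap_apply]

lemma meas_eq_of_symmDiff_null {α : Type*} [MeasurableSpace α] {μ : MeasureTheory.Measure α}
    {X Y : Set α} (h : μ (X ∆ Y) = 0) : μ X = μ Y := by
  have h1 : X ⊆ Y ∪ (X ∆ Y) := by
    intro x hx
    by_cases hy : x ∈ Y
    · exact Or.inl hy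
    · exact Or.inr (Or.inl ⟨hx, hy⟩)
  have h2 : Y ⊆ X ∪ (X ∆ Y) := by
    intro y hy
    by_cases hx : y ∈ X
    · exact Or.inl hx
    · exact Or.inr (Or.inr ⟨hy, hx⟩)
  apply le_antisymm
  · calc μ X ≤ μ (Y ∪ (X ∆ Y)) := measure_mono h1
      _ ≤ μ Y + μ (X ∆ Y) := measure_union_le _ _
      _ = μ Y := by rw [h, add_zero]
  · calc μ Y ≤ μ (X ∪ (X ∆ Y)) := measure_mono h2
      _ ≤ μ X + μ (X ∆ Y) := measure_union_le _ _
      _ = μ X := by rw [h, add_zero]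

variable {k : ℕ} (E : Fin k → Set unitInterval)
  (hEm : ∀ i, MeasurableSet (E i))
  (hEdisj : ∀ i j : Fin k, i ≠ j → Disjoint (E i) (E j))
  (hEcover : (⋃ i, E i) = univ)

/-- images in `ℝ`. -/
def Bv : Fin k → Set ℝ := fun i => Subtype.val '' E i

include hEm in
lemma Bv_meas : ∀ i, MeasurableSet (Bv E i) := fun i => I01_me.measurableSet_image' (hEm i)

lemma Bv_sub : ∀ i, Bv E i ⊆ Icc 0 1 := by
  rintro i x ⟨y, -, rfl⟩
  exact y.2

include hEdisj in
lemma Bv_disj : ∀ i j : Fin k, i ≠ j → Disjoint (Bv E i) (Bv E j) := fun i j hij =>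
  (Set.disjoint_image_of_injective Subtype.val_injective (hEdisj i j hij))

include hEcover in
lemma Bv_cover : (⋃ i, Bv E i) = Icc (0:ℝ) 1 := by
  have h : (⋃ i, Bv E i) = Subtype.val '' ⋃ i, E i := by
    simp [Bv, image_iUnion]
  rw [h, hEcover, image_univ, Subtype.range_coe]

include hEm hEdisj hEcover in
lemma psi0_mem (x : unitInterval) : pf (Bv E) (x : ℝ) ∈ Icc (0:ℝ) 1 :=
  pf_mem01 (Bv E) (Bv_meas E hEm) (Bv_sub E) (Bv_disj E hEdisj) (Bv_cover E hEcover) x.2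

/-- the measurable rearranging map on the unit interval. -/
def psi0 (hEm : ∀ i, MeasurableSet (E i))
    (hEdisj : ∀ i j : Fin k, i ≠ j → Disjoint (E i) (E j))
    (hEcover : (⋃ i, E i) = univ) : unitInterval → unitInterval :=
  fun x => ⟨pf (Bv E) (x : ℝ), psi0_mem E hEm hEdisj hEcover x⟩

lemma psi0_meas : Measurable (psi0 E hEm hEdisj hEcover) :=
  ((pf_measurable (Bv E) (Bv_meas E hEm) (Bv_sub E)).comp measurable_subtype_coe).subtype_mk

lemma psi0_preimage_meas {T : Set unitInterval} (hT : MeasurableSet T) :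
    volume (psi0 E hEm hEdisj hEcover ⁻¹' T) = volume T := by
  rw [I01_vol, I01_vol T]
  have hTv : MeasurableSet (Subtype.val '' T) := I01_me.measurableSet_image' hT
  have him : Subtype.val '' (psi0 E hEm hEdisj hEcover ⁻¹' T)
      = Icc 0 1 ∩ pf (Bv E) ⁻¹' (Subtype.val '' T) := by
    ext v
    constructor
    · rintro ⟨x, hx, rfl⟩
      exact ⟨x.2, ⟨psi0 E hEm hEdisj hEcover x, hx, rfl⟩⟩
    · rintro ⟨hv, hpf⟩
      refine ⟨⟨v, hv⟩, ?_, rfl⟩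
      obtain ⟨t, ht, hteq⟩ := hpf
      have : psi0 E hEm hEdisj hEcover ⟨v, hv⟩ = t := Subtype.ext hteq.symm
      rw [mem_preimage, this]
      exact ht
  rw [him, pf_preimage (Bv E) (Bv_meas E hEm) (Bv_sub E) (Bv_disj E hEdisj)
    (Bv_cover E hEcover) hTv,
    inter_eq_self_of_subset_left (fun v hv => ?_)]
  obtain ⟨t, -, rfl⟩ := hv
  exact t.2

lemma psi0_preimage_null {Z : Set unitInterval} (hZ : volume Z = 0) :
    volume (psi0 E hEm hEdisj hEcover ⁻¹' Z) = 0 := by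
  have h1 : Z ⊆ toMeasurable volume Z := subset_toMeasurable _ _
  have h2 : volume (toMeasurable volume Z) = 0 := by rw [measure_toMeasurable]; exact hZ
  refine le_antisymm ?_ zero_le
  calc volume (psi0 E hEm hEdisj hEcover ⁻¹' Z)
      ≤ volume (psi0 E hEm hEdisj hEcover ⁻¹' toMeasurable volume Z) :=
        measure_mono (preimage_mono h1)
    _ = volume (toMeasurable volume Z) :=
        psi0_preimage_meas E hEm hEdisj hEcover (measurableSet_toMeasurable _ _)
    _ = 0 := h2

lemma psi0_preimage_nullmeas {T : Set unitInterval} (hT : NullMeasurableSet T volume) :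
    volume (psi0 E hEm hEdisj hEcover ⁻¹' T) = volume T := by
  set T0 := toMeasurable volume T with hT0def
  have hae : volume (T ∆ T0) = 0 :=
    MeasureTheory.measure_symmDiff_eq_zero_iff.2 hT.toMeasurable_ae_eq.symm
  have h1 : volume (psi0 E hEm hEdisj hEcover ⁻¹' (T ∆ T0)) = 0 :=
    psi0_preimage_null E hEm hEdisj hEcover hae
  have h2 : (psi0 E hEm hEdisj hEcover ⁻¹' T) ∆ (psi0 E hEm hEdisj hEcover ⁻¹' T0)
      = psi0 E hEm hEdisj hEcover ⁻¹' (T ∆ T0) := by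
    simp [Set.preimage_symmDiff]
  rw [meas_eq_of_symmDiff_null (by rw [h2]; exact h1),
    psi0_preimage_meas E hEm hEdisj hEcover (measurableSet_toMeasurable _ _)]
  exact (meas_eq_of_symmDiff_null hae).symm

lemma psi0_image_val {X : Set unitInterval} :
    Subtype.val '' (psi0 E hEm hEdisj hEcover '' X) = pf (Bv E) '' (Subtype.val '' X) := by
  rw [← image_comp, ← image_comp]
  rfl

lemma psi0_image_meas_vol {X : Set unitInterval} (hX : MeasurableSet X)
    (hXsub : Subtype.val '' X ⊆ Icc 0 1 \ badN (Bv E)) :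
    MeasurableSet (psi0 E hEm hEdisj hEcover '' X)
      ∧ volume (psi0 E hEm hEdisj hEcover '' X) = volume X := by
  have hXv : MeasurableSet (Subtype.val '' X) := I01_me.measurableSet_image' hX
  have hmeasR : MeasurableSet (pf (Bv E) '' (Subtype.val '' X)) :=
    pf_image_meas (Bv E) (Bv_meas E hEm) (Bv_sub E) (Bv_disj E hEdisj) (Bv_cover E hEcover)
      hXv hXsub
  constructor
  · have : psi0 E hEm hEdisj hEcover '' X
        = Subtype.val ⁻¹' (pf (Bv E) '' (Subtype.val '' X)) := by
      rw [← psi0_image_val E hEm hEdisj hEcover,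
        preimage_image_eq _ Subtype.val_injective]
    rw [this]
    exact measurable_subtype_coe hmeasR
  · rw [I01_vol, psi0_image_val E hEm hEdisj hEcover,
      pf_image_vol (Bv E) (Bv_meas E hEm) (Bv_sub E) (Bv_disj E hEdisj) (Bv_cover E hEcover)
        hXv hXsub, ← I01_vol]

lemma psi0_image_null {Z : Set unitInterval} (hZ : volume Z = 0) :
    volume (psi0 E hEm hEdisj hEcover '' Z) = 0 := by
  rw [I01_vol, psi0_image_val E hEm hEdisj hEcover]
  apply pf_image_null (Bv E) (Bv_meas E hEm) (Bv_sub E) (Bv_disj E hEdisj) (Bv_cover E hEcover)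
  · rw [← I01_vol]; exact hZ
  · rintro v ⟨t, -, rfl⟩; exact t.2

end I01
section Core

theorem exists_psi {k : ℕ} (E : Fin k → Set unitInterval)
    (hEm : ∀ i, MeasurableSet (E i))
    (hEdisj : ∀ i j : Fin k, i ≠ j → Disjoint (E i) (E j))
    (hEcover : (⋃ i, E i) = univ) :
    ∃ ψ : unitInterval → unitInterval,
      Function.Bijective ψ ∧
      AEMeasurable ψ volume ∧
      (∀ A : Set unitInterval, NullMeasurableSet A volume → volume (ψ ⁻¹' A) = volume A) ∧
      AEMeasurable (Function.invFun ψ) volume ∧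
      (∀ A : Set unitInterval, NullMeasurableSet A volume →
        volume (Function.invFun ψ ⁻¹' A) = volume A) ∧
      (∀ i : Fin k, ∃ X : Set unitInterval, MeasurableSet X ∧ volume X = volume (E i) ∧
        X ⊆ Subtype.val ⁻¹' Icc (cums (Bv E) i) (cums (Bv E) ((i : ℕ) + 1)) ∧
        volume ((ψ '' E i) ∆ X) = 0) := by
  classical
  set ψ0 := psi0 E hEm hEdisj hEcover with hψ0def
  set NI : Set unitInterval := Subtype.val ⁻¹' (badN (Bv E)) with hNIdef
  set CI : Set unitInterval := Subtype.val ⁻¹' cantorSet with hCIdef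
  set DD : Set unitInterval := NI ∪ CI ∪ ψ0 ⁻¹' CI with hDDdef
  have hNImeas : MeasurableSet NI :=
    measurable_subtype_coe (badN_measurable (Bv E) (Bv_meas E hEm) (Bv_sub E))
  have hCImeas : MeasurableSet CI := measurable_subtype_coe measurableSet_cantorSet
  have hDDmeas : MeasurableSet DD :=
    (hNImeas.union hCImeas).union (psi0_meas E hEm hEdisj hEcover hCImeas)
  have hNInull : volume NI = 0 := by
    rw [I01_vol]
    exact measure_mono_null (image_preimage_subset _ _)
      (badN_null (Bv E) (Bv_meas E hEm) (Bv_sub E))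
  have hCInull : volume CI = 0 := by
    rw [I01_vol]
    exact measure_mono_null (image_preimage_subset _ _) volume_cantorSet
  have hpreCInull : volume (ψ0 ⁻¹' CI) = 0 := by
    rw [hψ0def, psi0_preimage_meas E hEm hEdisj hEcover hCImeas]
    exact hCInull
  have hDDnull : volume DD = 0 := by
    rw [hDDdef]
    exact measure_union_null (measure_union_null hNInull hCInull) hpreCInull
  have hGd_sub : Subtype.val '' DDᶜ ⊆ Icc 0 1 \ badN (Bv E) := by
    rintro v ⟨x, hx, rfl⟩
    exact ⟨x.2, fun hbad => hx (Or.inl (Or.inl hbad))⟩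
  have hinj : InjOn ψ0 DDᶜ := by
    intro x hx y hy hxy
    apply Subtype.ext
    exact pf_injOn (Bv E) (Bv_meas E hEm) (Bv_sub E) (Bv_disj E hEdisj) (Bv_cover E hEcover)
      (hGd_sub (mem_image_of_mem _ hx)) (hGd_sub (mem_image_of_mem _ hy))
      (congrArg Subtype.val hxy)
  set SS := ψ0 '' DDᶜ with hSSdef
  obtain ⟨hSSmeas, hSSvol⟩ := psi0_image_meas_vol E hEm hEdisj hEcover hDDmeas.compl hGd_sub
  have hDDc_vol : volume DDᶜ = 1 := by
    rw [measure_compl hDDmeas (by simp), hDDnull]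
    simp
  have hSSc_null : volume SSᶜ = 0 := by
    rw [measure_compl hSSmeas (by simp), hSSvol, hDDc_vol]
    simp
  have hCI_SSc : CI ⊆ SSᶜ := by
    intro x hx hxSS
    obtain ⟨z, hz, rfl⟩ := hxSS
    exact hz (Or.inr hx)
  -- cardinality
  have hcard_cantor_CI : Cardinal.mk cantorSet ≤ Cardinal.mk CI := by
    apply Cardinal.mk_le_of_injective (f := fun c : cantorSet =>
      (⟨⟨c.1, cantorSet_subset_unitInterval c.2⟩,
        show ((⟨c.1, cantorSet_subset_unitInterval c.2⟩ : unitInterval) : ℝ) ∈ cantorSet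
          from c.2⟩ : CI))
    intro a b hab
    apply Subtype.ext
    exact congrArg (fun x : CI => ((x : unitInterval) : ℝ)) hab
  have hcont_CI : Cardinal.continuum ≤ Cardinal.mk CI :=
    le_trans continuum_le_mk_cantorSet hcard_cantor_CI
  have hmkI : Cardinal.mk unitInterval = Cardinal.continuum :=
    Cardinal.mk_Icc_real zero_lt_one
  have hmkDD : Cardinal.mk DD = Cardinal.continuum := by
    apply le_antisymm
    · rw [← hmkI]; exact Cardinal.mk_set_le _
    · exact le_trans hcont_CI (Cardinal.mk_le_mk_of_subset (fun x hx => Or.inl (Or.inr hx)))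
  have hmkSSc : Cardinal.mk ↥(SSᶜ) = Cardinal.continuum := by
    apply le_antisymm
    · rw [← hmkI]; exact Cardinal.mk_set_le _
    · exact le_trans hcont_CI (Cardinal.mk_le_mk_of_subset hCI_SSc)
  obtain ⟨e⟩ := Cardinal.eq.1 (hmkDD.trans hmkSSc.symm)
  set ψ : unitInterval → unitInterval :=
    fun x => if h : x ∈ DD then ((e ⟨x, h⟩ : ↥(SSᶜ)) : unitInterval) else ψ0 x with hψdef
  have hout : ∀ x, x ∉ DD → ψ x = ψ0 x := fun x hx => dif_neg hx
  have hin : ∀ x (h : x ∈ DD), ψ x = ((e ⟨x, h⟩ : ↥(SSᶜ)) : unitInterval) :=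
    fun x h => dif_pos h
  have hψSSc : ∀ x, x ∈ DD → ψ x ∈ SSᶜ := by
    intro x h
    rw [hin x h]
    exact (e ⟨x, h⟩).2
  have hψSS : ∀ x, x ∉ DD → ψ x ∈ SS := by
    intro x h
    rw [hout x h]
    exact mem_image_of_mem _ h
  -- bijectivity
  have hbij : Function.Bijective ψ := by
    constructor
    · intro a b hab
      by_cases ha : a ∈ DD <;> by_cases hb : b ∈ DD
      · rw [hin a ha, hin b hb] at hab
        have h1 : e ⟨a, ha⟩ = e ⟨b, hb⟩ := Subtype.ext hab
        have h2 := e.injective h1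
        exact congrArg Subtype.val h2
      · exact absurd (hab ▸ hψSSc a ha) (not_not_intro (hψSS b hb))
      · exact absurd (hab.symm ▸ hψSSc b hb) (not_not_intro (hψSS a ha))
      · rw [hout a ha, hout b hb] at hab
        exact hinj ha hb hab
    · intro y
      by_cases hy : y ∈ SS
      · obtain ⟨x, hx, hxy⟩ := hy
        exact ⟨x, by rw [hout x hx]; exact hxy⟩
      · refine ⟨(e.symm ⟨y, hy⟩ : ↥DD), ?_⟩
        rw [hin _ (e.symm ⟨y, hy⟩).2]
        have h1 : (⟨((e.symm ⟨y, hy⟩ : ↥DD) : unitInterval), (e.symm ⟨y, hy⟩).2⟩ : ↥DD)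
            = e.symm ⟨y, hy⟩ := rfl
        rw [h1, e.apply_symm_apply]
  -- a.e. equal to ψ0
  have hψdiff : {x | ψ x ≠ ψ0 x} ⊆ DD := by
    intro x hx
    by_contra h
    exact hx (hout x h)
  have hψae : ψ =ᵐ[volume] ψ0 :=
    (MeasureTheory.ae_iff).2 (measure_mono_null hψdiff hDDnull)
  have hψaemeas : AEMeasurable ψ volume :=
    (psi0_meas E hEm hEdisj hEcover).aemeasurable.congr hψae.symm
  -- preimage measure
  have hψpre : ∀ A : Set unitInterval, NullMeasurableSet A volume →
      volume (ψ ⁻¹' A) = volume A := by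
    intro A hA
    have h1 : (ψ ⁻¹' A) ∆ (ψ0 ⁻¹' A) ⊆ DD := by
      rintro x (⟨hx1, hx2⟩ | ⟨hx1, hx2⟩)
      · exact hψdiff (fun heq => hx2 (by rw [mem_preimage, ← heq]; exact hx1))
      · exact hψdiff (fun heq => hx2 (by rw [mem_preimage, heq]; exact hx1))
    rw [meas_eq_of_symmDiff_null (measure_mono_null h1 hDDnull)]
    exact psi0_preimage_nullmeas E hEm hEdisj hEcover hA
  -- forward null sets
  have hfwd_null : ∀ Z : Set unitInterval, volume Z = 0 → volume (ψ '' Z) = 0 := by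
    intro Z hZ
    have h1 : ψ '' Z ⊆ (ψ0 '' (Z \ DD)) ∪ SSᶜ := by
      rintro y ⟨x, hx, rfl⟩
      by_cases hxd : x ∈ DD
      · exact Or.inr (hψSSc x hxd)
      · exact Or.inl ⟨x, ⟨hx, hxd⟩, (hout x hxd).symm⟩
    apply measure_mono_null h1
    apply measure_union_null _ hSSc_null
    exact psi0_image_null E hEm hEdisj hEcover (measure_mono_null diff_subset hZ)
  -- symmetric-difference key inclusion
  have hkey : ∀ T : Set unitInterval, (ψ '' T) ∆ (ψ0 '' (T \ DD)) ⊆ SSᶜ := by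
    intro T
    rintro y (⟨hy1, hy2⟩ | ⟨hy1, hy2⟩)
    · obtain ⟨x, hx, rfl⟩ := hy1
      by_cases hxd : x ∈ DD
      · exact hψSSc x hxd
      · exact absurd ⟨x, ⟨hx, hxd⟩, (hout x hxd).symm⟩ hy2
    · obtain ⟨x, hx, rfl⟩ := hy1
      exact absurd ⟨x, hx.1, hout x hx.2⟩ hy2
  have hdval : ∀ T : Set unitInterval, Subtype.val '' (T \ DD) ⊆ Icc 0 1 \ badN (Bv E) :=
    fun T hv => fun v => hGd_sub (image_mono (f := Subtype.val) (fun x hx => hx.2) v)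
  -- forward measure on measurable sets
  have hfwd_meas : ∀ T : Set unitInterval, MeasurableSet T → volume (ψ '' T) = volume T := by
    intro T hT
    obtain ⟨h2m, h2v⟩ := psi0_image_meas_vol E hEm hEdisj hEcover (hT.diff hDDmeas)
      (fun v hv => hGd_sub (image_mono (f := Subtype.val) (fun x hx => hx.2) hv))
    rw [meas_eq_of_symmDiff_null (measure_mono_null (hkey T) hSSc_null), h2v]
    apply meas_eq_of_symmDiff_null
    apply measure_mono_null _ hDDnull
    rintro x (⟨hx1, hx2⟩ | ⟨hx1, hx2⟩)
    · exact absurd hx1.1 hx2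
    · by_contra h
      exact hx2 ⟨hx1, h⟩
  -- forward measure on null measurable sets
  have himg : ∀ T : Set unitInterval, NullMeasurableSet T volume →
      volume (ψ '' T) = volume T := by
    intro T hT
    set T0 := toMeasurable volume T with hT0def
    have hae0 : volume (T ∆ T0) = 0 :=
      MeasureTheory.measure_symmDiff_eq_zero_iff.2 hT.toMeasurable_ae_eq.symm
    have hsub : (ψ '' T) ∆ (ψ '' T0) ⊆ ψ '' (T ∆ T0) := by
      rintro y (⟨hy1, hy2⟩ | ⟨hy1, hy2⟩)
      · obtain ⟨x, hx, rfl⟩ := hy1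
        exact ⟨x, Or.inl ⟨hx, fun h => hy2 ⟨x, h, rfl⟩⟩, rfl⟩
      · obtain ⟨x, hx, rfl⟩ := hy1
        exact ⟨x, Or.inr ⟨hx, fun h => hy2 ⟨x, h, rfl⟩⟩, rfl⟩
    rw [meas_eq_of_symmDiff_null (measure_mono_null hsub (hfwd_null _ hae0)),
      hfwd_meas T0 (measurableSet_toMeasurable _ _), measure_toMeasurable]
  -- inverse function: preimages are images
  have hgpre : ∀ T : Set unitInterval, Function.invFun ψ ⁻¹' T = ψ '' T := by
    intro T
    ext y
    constructor
    · intro hy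
      exact ⟨Function.invFun ψ y, hy, Function.rightInverse_invFun hbij.2 y⟩
    · rintro ⟨t, ht, rfl⟩
      rw [mem_preimage, Function.leftInverse_invFun hbij.1 t]
      exact ht
  -- a.e. measurability of the inverse
  haveI hPolish : PolishSpace unitInterval := IsClosed.polishSpace isClosed_Icc
  haveI hSB : StandardBorelSpace ↥(DDᶜ) := hDDmeas.compl.standardBorel
  set fsub : ↥(DDᶜ) → unitInterval := fun x => ψ0 x.1 with hfsubdef
  have hfsub_meas : Measurable fsub :=
    (psi0_meas E hEm hEdisj hEcover).comp measurable_subtype_coe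
  have hfsub_inj : Function.Injective fsub := fun a b hab =>
    Subtype.ext (hinj a.2 b.2 hab)
  have hemb : MeasurableEmbedding fsub := hfsub_meas.measurableEmbedding hfsub_inj
  set fimg := hemb.equivImage Set.univ with hfimgdef
  have hrange_eq : fsub '' Set.univ = SS := by
    ext y
    constructor
    · rintro ⟨⟨x, hx⟩, -, rfl⟩
      exact ⟨x, hx, rfl⟩
    · rintro ⟨x, hx, rfl⟩
      exact ⟨⟨x, hx⟩, trivial, rfl⟩
  set F : ↥(fsub '' Set.univ) → unitInterval := fun z => ((fimg.symm z).1 : ↥(DDᶜ)).1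
    with hFdef
  have hFmeas : Measurable F :=
    measurable_subtype_coe.comp (measurable_subtype_coe.comp fimg.symm.measurable)
  set hI : unitInterval → unitInterval := fun y =>
    if hy : y ∈ fsub '' Set.univ
      then F ⟨y, hy⟩
      else (⟨y, hy⟩ : {a : unitInterval // a ∉ fsub '' Set.univ}).1
    with hIdef
  have hhI_meas : Measurable hI :=
    Measurable.dite hFmeas measurable_subtype_coe (hemb.measurableSet_image' MeasurableSet.univ)
  have hgeq : ∀ y ∈ SS, Function.invFun ψ y = hI y := by
    intro y hy
    obtain ⟨x, hxDD, hxy⟩ := hy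
    have hψx : ψ x = y := by rw [hout x hxDD]; exact hxy
    have h1 : Function.invFun ψ y = x := by
      rw [← hψx, Function.leftInverse_invFun hbij.1]
    have hyim : y ∈ fsub '' Set.univ := ⟨⟨x, hxDD⟩, trivial, hxy⟩
    have h3 : fimg (⟨⟨x, hxDD⟩, trivial⟩ : ↥(Set.univ : Set ↥(DDᶜ))) = ⟨y, hyim⟩ :=
      Subtype.ext hxy
    have h4 : fimg.symm ⟨y, hyim⟩ = ⟨⟨x, hxDD⟩, trivial⟩ := by
      rw [← h3, MeasurableEquiv.symm_apply_apply]
    have h2 : hI y = x := by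
      rw [hIdef]
      simp only [dif_pos hyim]
      rw [hFdef]
      simp only [h4]
    rw [h1, h2]
  have hginv_ae : Function.invFun ψ =ᵐ[volume] hI := by
    apply (MeasureTheory.ae_iff).2
    apply measure_mono_null _ hSSc_null
    intro y hy
    by_contra h
    exact hy (hgeq y (not_not.1 h))
  have hginv_aemeas : AEMeasurable (Function.invFun ψ) volume :=
    hhI_meas.aemeasurable.congr hginv_ae.symm
  refine ⟨ψ, hbij, hψaemeas, hψpre, hginv_aemeas, ?_, ?_⟩
  · intro A hA
    rw [hgpre]
    exact himg A hA
  · intro i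
    obtain ⟨hXm, hXv⟩ := psi0_image_meas_vol E hEm hEdisj hEcover ((hEm i).diff hDDmeas)
      (fun v hv => hGd_sub (image_mono (f := Subtype.val) (fun x hx => hx.2) hv))
    refine ⟨ψ0 '' (E i \ DD), hXm, ?_, ?_, ?_⟩
    · rw [hXv]
      apply meas_eq_of_symmDiff_null
      apply measure_mono_null _ hDDnull
      rintro x (⟨hx1, hx2⟩ | ⟨hx1, hx2⟩)
      · exact absurd hx1.1 hx2
      · by_contra h
        exact hx2 ⟨hx1, h⟩
    · rintro y ⟨x, hx, rfl⟩
      exact pf_mem (Bv E) (Bv_sub E) (Bv_disj E hEdisj) (mem_image_of_mem Subtype.val hx.1)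
    · exact measure_mono_null (hkey (E i)) hSSc_null

end Core
section Jpart

variable {k : ℕ} (c : ℕ → ℝ)

/-- The target intervals inside the unit interval. -/
def Jv (i : Fin k) : Set unitInterval :=
  if (i : ℕ) + 1 = k then Subtype.val ⁻¹' (Icc (c i) 1)
  else Subtype.val ⁻¹' (Ico (c i) (c ((i : ℕ) + 1)))

variable (hcm : Monotone c) (hc0 : c 0 = 0) (hck : c k = 1)

include hcm hc0 in
lemma c_nonneg (n : ℕ) : 0 ≤ c n := hc0 ▸ hcm (Nat.zero_le n)

include hcm hck in
lemma c_le_one {n : ℕ} (hn : n ≤ k) : c n ≤ 1 := hck ▸ hcm hn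

lemma Jv_meas (i : Fin k) : MeasurableSet (Jv c i) := by
  rw [Jv]
  split_ifs
  · exact measurable_subtype_coe measurableSet_Icc
  · exact measurable_subtype_coe measurableSet_Ico

include hcm hc0 hck in
lemma Jv_sub (i : Fin k) :
    Jv c i ⊆ Subtype.val ⁻¹' (Icc (c i) (c ((i : ℕ) + 1))) := by
  rw [Jv]
  split_ifs with h
  · intro x hx
    exact ⟨hx.1, by rw [h, hck]; exact hx.2⟩
  · intro x hx
    exact ⟨hx.1, le_of_lt hx.2⟩

include hcm in
lemma Jv_disj : ∀ i j : Fin k, i ≠ j → Disjoint (Jv c i) (Jv c j) := by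
  have aux : ∀ i j : Fin k, (i : ℕ) < (j : ℕ) → ∀ x : unitInterval,
      x ∈ Jv c i → x ∈ Jv c j → False := by
    intro i j hij x hxi hxj
    have hik : (i : ℕ) + 1 ≠ k := by
      have := j.isLt
      omega
    rw [Jv, if_neg hik] at hxi
    have h1 : (x : ℝ) < c ((i : ℕ) + 1) := hxi.2
    have h2 : c j ≤ (x : ℝ) := by
      rw [Jv] at hxj
      split_ifs at hxj
      · exact hxj.1
      · exact hxj.1
    have h3 : c ((i : ℕ) + 1) ≤ c j := hcm hij
    linarith
  intro i j hij
  rw [Set.disjoint_left]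
  intro x hxi hxj
  rcases lt_or_gt_of_ne (fun h : (i : ℕ) = (j : ℕ) => hij (Fin.ext h)) with h | h
  · exact aux i j h x hxi hxj
  · exact aux j i h x hxj hxi

include hcm hc0 in
lemma Jv_cover (hk : 0 < k) : (⋃ i : Fin k, Jv c i) = univ := by
  apply eq_univ_of_forall
  intro x
  set sfin := Finset.univ.filter (fun i : Fin k => c i ≤ (x : ℝ)) with hsfin
  have hne : sfin.Nonempty := by
    refine ⟨⟨0, hk⟩, ?_⟩
    simp only [hsfin, Finset.mem_filter, Finset.mem_univ, true_and]
    have h0 : c ((⟨0, hk⟩ : Fin k) : ℕ) = 0 := hc0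
    rw [h0]
    exact x.2.1
  set i0 := sfin.max' hne with hi0
  have hi0mem : c i0 ≤ (x : ℝ) := by
    have := sfin.max'_mem hne
    simp only [hsfin, Finset.mem_filter, Finset.mem_univ, true_and] at this
    exact this
  refine mem_iUnion.2 ⟨i0, ?_⟩
  rw [Jv]
  split_ifs with h
  · exact ⟨hi0mem, x.2.2⟩
  · have hlt : (i0 : ℕ) + 1 < k := by
      have := i0.isLt
      omega
    refine ⟨hi0mem, ?_⟩
    by_contra hcon
    push_neg at hcon
    have : (⟨(i0 : ℕ) + 1, hlt⟩ : Fin k) ∈ sfin := by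
      simp only [hsfin, Finset.mem_filter, Finset.mem_univ, true_and]
      exact hcon
    have := sfin.le_max' _ this
    rw [← hi0] at this
    have h2 : ((⟨(i0 : ℕ) + 1, hlt⟩ : Fin k) : ℕ) = (i0 : ℕ) + 1 := rfl
    omega

lemma val_preimage_vol {a b : ℝ} (ha : 0 ≤ a) (hb : b ≤ 1) :
    volume (Subtype.val ⁻¹' (Icc a b) : Set unitInterval) = ENNReal.ofReal (b - a) := by
  rw [I01_vol, Set.image_preimage_eq_inter_range, Subtype.range_coe]
  have h : Icc a b ∩ Icc 0 1 = Icc a b := by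
    apply inter_eq_self_of_subset_left
    intro y hy
    exact ⟨le_trans ha hy.1, le_trans hy.2 hb⟩
  rw [h, Real.volume_Icc]

include hcm hc0 hck in
lemma Jv_vol (i : Fin k) :
    volume (Jv c i) = ENNReal.ofReal (c ((i : ℕ) + 1) - c i) := by
  have ha : 0 ≤ c i := c_nonneg c hcm hc0 _
  have hb : c ((i : ℕ) + 1) ≤ 1 := c_le_one c hcm hck i.isLt
  rw [Jv]
  split_ifs with h
  · rw [val_preimage_vol ha le_rfl, h, hck]
  · rw [I01_vol, Set.image_preimage_eq_inter_range, Subtype.range_coe]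
    have hsub : Ico (c i) (c ((i : ℕ) + 1)) ∩ Icc 0 1 = Ico (c i) (c ((i : ℕ) + 1)) := by
      apply inter_eq_self_of_subset_left
      intro y hy
      exact ⟨le_trans ha hy.1, le_trans (le_of_lt hy.2) hb⟩
    rw [hsub, Real.volume_Ico]

end Jpart

section Reduce

lemma reduce_partition {k : ℕ} (A : Fin k → Set unitInterval)
    (hAm : ∀ i, NullMeasurableSet (A i) volume)
    (hAdisj : ∀ i j : Fin k, i ≠ j → Disjoint (A i) (A j))
    (hAcover : (⋃ i, A i) = univ) :
    ∃ D : Fin k → Set unitInterval, (∀ i, MeasurableSet (D i)) ∧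
      (∀ i j : Fin k, i ≠ j → Disjoint (D i) (D j)) ∧ (⋃ i, D i) = univ ∧
      ∀ i, volume ((A i) ∆ (D i)) = 0 := by
  classical
  set C : Fin k → Set unitInterval := fun i => toMeasurable volume (A i) with hCdef
  have hCm : ∀ i, MeasurableSet (C i) := fun i => measurableSet_toMeasurable _ _
  have hAC : ∀ i, A i ⊆ C i := fun i => subset_toMeasurable _ _
  have hACnull : ∀ i, volume (A i ∆ C i) = 0 := fun i =>
    MeasureTheory.measure_symmDiff_eq_zero_iff.2 (hAm i).toMeasurable_ae_eq.symm
  have hCint : ∀ i j : Fin k, i ≠ j → volume (C i ∩ C j) = 0 := by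
    intro i j hij
    have h1 : C i ∩ C j ⊆ (A i ∆ C i) ∪ (A j ∆ C j) := by
      rintro x ⟨hxi, hxj⟩
      by_cases h2 : x ∈ A i
      · by_cases h3 : x ∈ A j
        · exact absurd rfl ((hAdisj i j hij).ne_of_mem h2 h3)
        · exact Or.inr (Or.inr ⟨hxj, h3⟩)
      · exact Or.inl (Or.inr ⟨hxi, h2⟩)
    exact measure_mono_null h1 (measure_union_null (hACnull i) (hACnull j))
  set D : Fin k → Set unitInterval :=
    fun i => C i \ ⋃ j : Fin k, ⋃ (_ : (j : ℕ) < (i : ℕ)), C j with hDdef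
  have hDm : ∀ i, MeasurableSet (D i) := fun i =>
    (hCm i).diff (MeasurableSet.iUnion fun j => MeasurableSet.iUnion fun _ => hCm j)
  have hDC : ∀ i, D i ⊆ C i := fun i => diff_subset
  have hDdisj : ∀ i j : Fin k, i ≠ j → Disjoint (D i) (D j) := by
    have aux : ∀ i j : Fin k, (i : ℕ) < (j : ℕ) → Disjoint (D i) (D j) := by
      intro i j hij
      rw [Set.disjoint_left]
      intro x hxi hxj
      exact hxj.2 (mem_iUnion.2 ⟨i, mem_iUnion.2 ⟨hij, hDC i hxi⟩⟩)
    intro i j hij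
    rcases lt_or_gt_of_ne (fun h : (i : ℕ) = (j : ℕ) => hij (Fin.ext h)) with h | h
    · exact aux i j h
    · exact (aux j i h).symm
  have hDcover : (⋃ i, D i) = univ := by
    apply eq_univ_of_forall
    intro x
    have hx : x ∈ ⋃ i, C i := by
      have : x ∈ ⋃ i, A i := hAcover ▸ mem_univ x
      obtain ⟨i, hi⟩ := mem_iUnion.1 this
      exact mem_iUnion.2 ⟨i, hAC i hi⟩
    obtain ⟨i, hi⟩ := mem_iUnion.1 hx
    have hP : ∃ n : ℕ, ∃ h : n < k, x ∈ C ⟨n, h⟩ := ⟨i, i.isLt, by simpa using hi⟩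
    set n0 := Nat.find hP with hn0
    obtain ⟨hn0k, hn0mem⟩ := Nat.find_spec hP
    refine mem_iUnion.2 ⟨⟨n0, hn0k⟩, hn0mem, ?_⟩
    intro hcon
    obtain ⟨j, hj⟩ := mem_iUnion.1 hcon
    obtain ⟨hjlt, hjmem⟩ := mem_iUnion.1 hj
    exact Nat.find_min hP (m := (j : ℕ)) hjlt ⟨j.isLt, by simpa using hjmem⟩
  have hADnull : ∀ i, volume ((A i) ∆ (D i)) = 0 := by
    intro i
    have h1 : (A i) ∆ (D i) ⊆ (A i ∆ C i) ∪ (C i \ D i) := by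
      rintro x (⟨hx1, hx2⟩ | ⟨hx1, hx2⟩)
      · by_cases h3 : x ∈ C i
        · exact Or.inr ⟨h3, hx2⟩
        · exact Or.inl (Or.inl ⟨hx1, h3⟩)
      · exact Or.inl (Or.inr ⟨hDC i hx1, hx2⟩)
    have h2 : C i \ D i ⊆ ⋃ j : Fin k, ⋃ (_ : (j : ℕ) < (i : ℕ)), (C j ∩ C i) := by
      rintro x ⟨hx1, hx2⟩
      have : x ∈ ⋃ j : Fin k, ⋃ (_ : (j : ℕ) < (i : ℕ)), C j := by
        by_contra h
        exact hx2 ⟨hx1, h⟩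
      obtain ⟨j, hj⟩ := mem_iUnion.1 this
      obtain ⟨hjlt, hjmem⟩ := mem_iUnion.1 hj
      exact mem_iUnion.2 ⟨j, mem_iUnion.2 ⟨hjlt, hjmem, hx1⟩⟩
    have h3 : volume (C i \ D i) = 0 := by
      apply measure_mono_null h2
      apply measure_iUnion_null
      intro j
      apply measure_iUnion_null
      intro hjlt
      exact hCint j i (fun h => absurd (congrArg Fin.val h) (Nat.ne_of_lt hjlt))
    exact measure_mono_null h1 (measure_union_null (hACnull i) h3)
  exact ⟨D, hDm, hDdisj, hDcover, hADnull⟩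

end Reduce

lemma symmDiff_null_trans {α : Type*} [MeasurableSpace α] {μ : MeasureTheory.Measure α}
    {P Q R : Set α} (h1 : μ (P ∆ Q) = 0) (h2 : μ (Q ∆ R) = 0) : μ (P ∆ R) = 0 := by
  have hsub : P ∆ R ⊆ (P ∆ Q) ∪ (Q ∆ R) := by
    intro x hx
    by_cases hq : x ∈ Q
    · rcases hx with ⟨hp, hr⟩ | ⟨hr, hp⟩
      · exact Or.inr (Or.inl ⟨hq, hr⟩)
      · exact Or.inl (Or.inr ⟨hq, hp⟩)
    · rcases hx with ⟨hp, hr⟩ | ⟨hr, hp⟩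
      · exact Or.inl (Or.inl ⟨hp, hq⟩)
      · exact Or.inr (Or.inr ⟨hr, hq⟩)
  exact measure_mono_null hsub (measure_union_null h1 h2)

lemma invFun_preimage_eq_image {α β : Type*} [Nonempty α] {ψ : α → β}
    (h : Function.Bijective ψ) (T : Set α) : Function.invFun ψ ⁻¹' T = ψ '' T := by
  ext y
  constructor
  · intro hy
    exact ⟨Function.invFun ψ y, hy, Function.rightInverse_invFun h.2 y⟩
  · rintro ⟨t, ht, rfl⟩
    rw [Set.mem_preimage, Function.leftInverse_invFun h.1 t]
    exact ht

lemma image_symmDiff_subset {α β : Type*} (ψ : α → β) (P Q : Set α) :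
    (ψ '' P) ∆ (ψ '' Q) ⊆ ψ '' (P ∆ Q) := by
  rintro y (⟨hy1, hy2⟩ | ⟨hy1, hy2⟩)
  · obtain ⟨x, hx, rfl⟩ := hy1
    exact ⟨x, Or.inl ⟨hx, fun h => hy2 ⟨x, h, rfl⟩⟩, rfl⟩
  · obtain ⟨x, hx, rfl⟩ := hy1
    exact ⟨x, Or.inr ⟨hx, fun h => hy2 ⟨x, h, rfl⟩⟩, rfl⟩

end GraphonIso


/-- Any finite measurable partition of `[0,1]` can be mapped by some `ψ ∈ Φ₀` to a
partition into intervals, up to null sets. -/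
theorem exists_mPhi0_to_intervals (k : ℕ) (A : Fin k → Set I01)
    (hAm : ∀ i, NullMeasurableSet (A i) volume)
    (hAdisj : ∀ i j, i ≠ j → Disjoint (A i) (A j))
    (hAcover : (⋃ i, A i) = Set.univ) :
    ∃ (J : Fin k → Set I01) (ψ : I01 → I01),
      (∀ i, ((fun x : I01 => (x : ℝ)) '' J i).OrdConnected) ∧
      (∀ i j, i ≠ j → Disjoint (J i) (J j)) ∧
      (⋃ i, J i) = Set.univ ∧
      MPhi0 ψ ∧
      ∀ i, volume ((ψ '' A i) ∆ J i) = 0 := by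
  classical
  have hk : 0 < k := by
    rcases Nat.eq_zero_or_pos k with h | h
    · exfalso
      subst h
      have hmem : (0 : I01) ∈ ⋃ i : Fin 0, A i := hAcover ▸ mem_univ _
      obtain ⟨i, -⟩ := mem_iUnion.1 hmem
      exact absurd i.isLt (by omega)
    · exact h
  obtain ⟨D, hDm, hDdisj, hDcover, hADnull⟩ :=
    GraphonIso.reduce_partition A hAm hAdisj hAcover
  obtain ⟨ψ, hbij, hmeas, hpre, hinvmeas, hinvpre, hwit⟩ :=
    GraphonIso.exists_psi D hDm hDdisj hDcover
  set c : ℕ → ℝ := GraphonIso.cums (GraphonIso.Bv D) with hc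
  have hcm : Monotone c := GraphonIso.cums_mono _
  have hc0 : c 0 = 0 := GraphonIso.cums_zero _
  have hck : c k = 1 := GraphonIso.cums_k _ (GraphonIso.Bv_meas D hDm) (GraphonIso.Bv_sub D)
    (GraphonIso.Bv_disj D hDdisj) (GraphonIso.Bv_cover D hDcover)
  refine ⟨GraphonIso.Jv c, ψ, ?_, ?_, ?_, ?_, ?_⟩
  · intro i
    rw [GraphonIso.Jv]
    split_ifs
    · rw [Set.image_preimage_eq_inter_range, Subtype.range_coe]
      exact Set.ordConnected_Icc.inter Set.ordConnected_Icc
    · rw [Set.image_preimage_eq_inter_range, Subtype.range_coe]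
      exact Set.ordConnected_Ico.inter Set.ordConnected_Icc
  · exact GraphonIso.Jv_disj c hcm
  · exact GraphonIso.Jv_cover c hcm hc0 hk
  · exact ⟨hbij, ⟨hmeas, hpre⟩, ⟨hinvmeas, hinvpre⟩⟩
  · intro i
    obtain ⟨X, hXm, hXv, hXsub, hXsd⟩ := hwit i
    have hADi : volume ((ψ '' A i) ∆ (ψ '' D i)) = 0 := by
      apply measure_mono_null (GraphonIso.image_symmDiff_subset ψ (A i) (D i))
      rw [← GraphonIso.invFun_preimage_eq_image hbij]
      rw [hinvpre _ (MeasureTheory.NullMeasurableSet.of_null (hADnull i))]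
      exact hADnull i
    have h1 : volume ((ψ '' A i) ∆ X) = 0 := GraphonIso.symmDiff_null_trans hADi hXsd
    -- now compare X with the interval J i
    set V : Set I01 := Subtype.val ⁻¹' (Icc (c i) (c ((i : ℕ) + 1))) with hV
    have hVm : MeasurableSet V := measurable_subtype_coe measurableSet_Icc
    have hca : (0:ℝ) ≤ c i := GraphonIso.c_nonneg c hcm hc0 _
    have hcb : c ((i : ℕ) + 1) ≤ 1 := GraphonIso.c_le_one c hcm hck i.isLt
    have hVvol : volume V = ENNReal.ofReal (c ((i : ℕ) + 1) - c i) :=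
      GraphonIso.val_preimage_vol hca hcb
    have hXvol : volume X = ENNReal.ofReal (c ((i : ℕ) + 1) - c i) := by
      rw [hXv]
      have h2 : volume (D i) = volume (GraphonIso.Bv D i) := GraphonIso.I01_vol (D i)
      have h3 : c ((i : ℕ) + 1) - c i = (volume (GraphonIso.Bv D i)).toReal := by
        rw [hc, GraphonIso.cums_succ]
        ring
      rw [h2, h3, ENNReal.ofReal_toReal]
      exact GraphonIso.vol_ne_top (GraphonIso.Bv_sub D i)
    have hJvol : volume (GraphonIso.Jv c i) = ENNReal.ofReal (c ((i : ℕ) + 1) - c i) :=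
      GraphonIso.Jv_vol c hcm hc0 hck i
    have hJsub : GraphonIso.Jv c i ⊆ V := GraphonIso.Jv_sub c hcm hc0 hck i
    have hfin : volume X ≠ ⊤ := by rw [hXvol]; exact ENNReal.ofReal_ne_top
    have hVX : volume (V \ X) = 0 := by
      rw [MeasureTheory.measure_diff hXsub hXm.nullMeasurableSet hfin, hXvol, hVvol, tsub_self]
    have hVJ : volume (V \ GraphonIso.Jv c i) = 0 := by
      rw [MeasureTheory.measure_diff hJsub (GraphonIso.Jv_meas c i).nullMeasurableSet
        (by rw [hJvol]; exact ENNReal.ofReal_ne_top), hJvol, hVvol, tsub_self]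
    have hXJ : volume (X ∆ GraphonIso.Jv c i) = 0 := by
      apply measure_mono_null (t := (V \ X) ∪ (V \ GraphonIso.Jv c i))
      · rintro x (⟨hx1, hx2⟩ | ⟨hx1, hx2⟩)
        · exact Or.inr ⟨hXsub hx1, hx2⟩
        · exact Or.inl ⟨hJsub hx1, hx2⟩
      · exact measure_union_null hVX hVJ
    exact GraphonIso.symmDiff_null_trans h1 hXJ


end
end

section
/- Let U, W be graphons with δ_□(U,W) = 0. Then δ₁(U,W) = 0. -/
open MeasureTheory Set
open scoped symmDiff

noncomputable section

/-! ### Auxiliary material for the main theorem -/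

namespace GraphonZeroAux

/-- Index of the subinterval of length `1/(n+1)` containing `x`. -/
def idx (n : ℕ) (x : I01) : Fin (n + 1) :=
  ⟨min ⌊(x : ℝ) * (n + 1)⌋₊ n, lt_of_le_of_lt (min_le_right _ _) (Nat.lt_succ_self n)⟩

lemma measurable_idx (n : ℕ) : Measurable (idx n) := by
  have hmeas : Measurable fun t : ℝ => min ⌊t * (n + 1)⌋₊ n :=
    ((measurable_id.mul_const _).nat_floor).min measurable_const
  apply measurable_to_countable'
  intro a
  have : idx n ⁻¹' {a} =
      Subtype.val ⁻¹' ((fun t : ℝ => min ⌊t * (n + 1)⌋₊ n) ⁻¹' {(a : ℕ)}) := by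
    ext x
    simp [idx, Fin.ext_iff]
  rw [this]
  exact measurable_subtype_coe (hmeas (measurableSet_singleton _))

/-- A representative point of the `a`-th subinterval. -/
def rep (n : ℕ) (a : Fin (n + 1)) : I01 :=
  ⟨(a : ℕ) / (n + 1), by
    constructor
    · positivity
    · rw [div_le_one (by positivity)]
      have : (a : ℕ) ≤ n := Nat.lt_succ_iff.mp a.isLt
      have := (Nat.cast_le (α := ℝ)).mpr this
      linarith⟩

lemma idx_bounds (n : ℕ) (x : I01) :
    ((idx n x : ℕ) : ℝ) / (n + 1) ≤ (x : ℝ) ∧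
      (x : ℝ) ≤ ((idx n x : ℕ) + 1) / (n + 1) := by
  have hm : (0 : ℝ) < (n : ℝ) + 1 := by positivity
  have hx0 : (0 : ℝ) ≤ (x : ℝ) := x.2.1
  have hx1 : (x : ℝ) ≤ 1 := x.2.2
  have ht0 : (0 : ℝ) ≤ (x : ℝ) * (n + 1) := by positivity
  rcases le_or_gt ⌊(x : ℝ) * (n + 1)⌋₊ n with hle | hlt
  · have hidx : ((idx n x : ℕ) : ℝ) = (⌊(x : ℝ) * (n + 1)⌋₊ : ℝ) := by
      simp [idx, min_eq_left hle]
    constructor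
    · rw [hidx, div_le_iff₀ hm]
      exact Nat.floor_le ht0
    · rw [le_div_iff₀ hm, hidx]
      exact le_of_lt (Nat.lt_floor_add_one _)
  · have hidx : ((idx n x : ℕ) : ℝ) = (n : ℝ) := by
      simp [idx, min_eq_right (le_of_lt hlt)]
    constructor
    · rw [hidx, div_le_iff₀ hm]
      calc (n : ℝ) ≤ (⌊(x : ℝ) * (n + 1)⌋₊ : ℝ) := by exact_mod_cast le_of_lt hlt
        _ ≤ (x : ℝ) * (n + 1) := Nat.floor_le ht0
    · rw [le_div_iff₀ hm, hidx]
      nlinarith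
  
lemma dist_rep_idx (n : ℕ) (x : I01) : dist x (rep n (idx n x)) ≤ 1 / (n + 1 : ℝ) := by
  obtain ⟨h1, h2⟩ := idx_bounds n x
  have hm : (0 : ℝ) < (n : ℝ) + 1 := by positivity
  rw [Subtype.dist_eq, Real.dist_eq, abs_le]
  have hrep : ((rep n (idx n x) : ℝ)) = ((idx n x : ℕ) : ℝ) / (n + 1) := rfl
  have hgap : ((idx n x : ℕ) + 1) / ((n : ℝ) + 1) - ((idx n x : ℕ) : ℝ) / (n + 1) = 1 / (n + 1) := by
    field_simp
    ring
  constructor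
  · rw [hrep]
    linarith
  · rw [hrep]
    linarith

lemma integrable_of_bnd {F : I01 × I01 → ℝ} (hF : AEStronglyMeasurable F volume)
    (C : ℝ) (hC : ∀ p, |F p| ≤ C) : Integrable F volume :=
  Integrable.mono' (integrable_const C) hF (Filter.Eventually.of_forall fun p => by
    simpa [Real.norm_eq_abs] using hC p)

lemma integral_eq_sum_cells {ι : Type*} [Fintype ι] [MeasurableSpace ι]
    [MeasurableSingletonClass ι] {K : I01 × I01 → ι} (hK : Measurable K)
    {F : I01 × I01 → ℝ} (hF : Integrable F volume) :
    ∫ p, F p = ∑ c : ι, ∫ p in K ⁻¹' {c}, F p := by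
  have h1 : ∀ c : ι, ∫ p in K ⁻¹' {c}, F p = ∫ p, (K ⁻¹' {c}).indicator F p :=
    fun c => (integral_indicator (hK (measurableSet_singleton c))).symm
  simp only [h1]
  rw [← integral_finset_sum]
  · congr 1
    funext p
    rw [Finset.sum_eq_single (K p)]
    · simp [Set.indicator_of_mem]
    · intro c _ hc
      exact Set.indicator_of_notMem (by simp [Ne.symm hc]) F
    · simp
  · exact fun c _ => hF.indicator (hK (measurableSet_singleton c))

lemma cutNorm_nonneg (V : I01 × I01 → ℝ) : 0 ≤ cutNorm V := by
  apply Real.sSup_nonneg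
  rintro r ⟨S, T, _, _, rfl⟩
  positivity

lemma le_cutNorm {V : I01 × I01 → ℝ} (hV : Integrable V volume) {S T : Set I01}
    (hS : NullMeasurableSet S volume) (hT : NullMeasurableSet T volume) :
    |∫ p in S ×ˢ T, V p| ≤ cutNorm V := by
  apply le_csSup
  · refine ⟨∫ p, |V p|, ?_⟩
    rintro r ⟨S', T', _, _, rfl⟩
    calc |∫ p in S' ×ˢ T', V p| ≤ ∫ p in S' ×ˢ T', |V p| := by
          simpa [Real.norm_eq_abs] using
            norm_integral_le_integral_norm (μ := volume.restrict (S' ×ˢ T')) V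
      _ ≤ ∫ p, |V p| := integral_mono_measure Measure.restrict_le_self
          (Filter.Eventually.of_forall fun p => abs_nonneg _) hV.abs
  · exact ⟨S, T, hS, hT, rfl⟩

lemma mphi0_id : MPhi0 (id : I01 → I01) := by
  have hinv : Function.invFun (id : I01 → I01) = id := by
    funext a
    exact Function.leftInverse_invFun Function.injective_id a
  refine ⟨Function.bijective_id, ⟨aemeasurable_id, fun A _ => rfl⟩, ?_⟩
  rw [hinv]
  exact ⟨aemeasurable_id, fun A _ => rfl⟩

end GraphonZeroAux

/-- Graphons at cut distance zero are at `δ₁`-distance zero. -/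
theorem gDelta1_eq_zero_of_gDeltaBox_eq_zero (U W : I01 × I01 → ℝ)
    (hU : IsGraphon U) (hW : IsGraphon W) (h : gDeltaBox U W = 0) :
    gDelta1 U W = 0 := by
  classical
  open GraphonZeroAux in
  obtain ⟨hUsymm, ⟨CU, hCU⟩, hUm⟩ := hU
  obtain ⟨hWsymm, ⟨CW, hCW⟩, hWm⟩ := hW
  have hUsm : AEStronglyMeasurable U volume := hUm.aestronglyMeasurable
  have hUint : Integrable U volume := GraphonZeroAux.integrable_of_bnd hUsm CU hCU
  have hWint : Integrable W volume :=
    GraphonZeroAux.integrable_of_bnd hWm.aestronglyMeasurable CW hCW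
  have key : ∀ ε : ℝ, 0 < ε → ∃ r ∈ {r : ℝ | ∃ φ : I01 → I01, MPhi0 φ ∧
      r = l1Norm (fun p => U p - compMap W φ p)}, r < ε := by
    intro ε hε
    set δ := ε / 9 with hδ
    have hδpos : 0 < δ := by positivity
    obtain ⟨f, -, hfU, hfc, hfint⟩ := hUint.exists_hasCompactSupport_integral_sub_le hδpos
    obtain ⟨g, -, hgW, hgc, hgint⟩ := hWint.exists_hasCompactSupport_integral_sub_le hδpos
    obtain ⟨df, hdfpos, hdf⟩ := Metric.uniformContinuous_iff.mp
      (CompactSpace.uniformContinuous_of_continuous hfc) δ hδpos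
    obtain ⟨dg, hdgpos, hdg⟩ := Metric.uniformContinuous_iff.mp
      (CompactSpace.uniformContinuous_of_continuous hgc) δ hδpos
    obtain ⟨n, hn⟩ := exists_nat_one_div_lt (show (0:ℝ) < min df dg from lt_min hdfpos hdgpos)
    have hnf : 1 / ((n : ℝ) + 1) < df := lt_of_lt_of_le hn (min_le_left _ _)
    have hng : 1 / ((n : ℝ) + 1) < dg := lt_of_lt_of_le hn (min_le_right _ _)
    set ι := ((Fin (n+1) × Fin (n+1)) × (Fin (n+1) × Fin (n+1))) with hι
    set Nc := Fintype.card ι with hNc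
    have hNcpos : 0 < (Nc : ℝ) := by
      have : 0 < Nc := Fintype.card_pos
      exact_mod_cast this
    set η := δ / Nc with hη
    have hηpos : 0 < η := by positivity
    -- extract a measure-preserving map with small cut norm
    set Dbox := {r : ℝ | ∃ φ : I01 → I01, MPhi0 φ ∧
      r = cutNorm (fun p => U p - compMap W φ p)} with hDbox
    have hbne : Dbox.Nonempty := ⟨_, ⟨id, GraphonZeroAux.mphi0_id, rfl⟩⟩
    have hbdd : BddBelow Dbox := ⟨0, by
      rintro r ⟨ψ, -, rfl⟩; exact GraphonZeroAux.cutNorm_nonneg _⟩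
    have hlt : sInf Dbox < η := by
      rw [show sInf Dbox = 0 from h]; exact hηpos
    obtain ⟨r0, hr0mem, hr0lt⟩ := (csInf_lt_iff hbdd hbne).mp hlt
    obtain ⟨φ, hφ0, rfl⟩ := hr0mem
    have hφm : AEMeasurable φ volume := hφ0.2.1.1
    have hφpres := hφ0.2.1.2
    set φ₀ := hφm.mk φ with hφ₀def
    have hφ₀meas : Measurable φ₀ := hφm.measurable_mk
    have hφeq : φ =ᵐ[volume] φ₀ := hφm.ae_eq_mk
    have hmp : MeasurePreserving φ₀ volume volume := by
      refine ⟨hφ₀meas, ?_⟩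
      ext A hA
      rw [Measure.map_apply hφ₀meas hA]
      have e1 : (φ₀ ⁻¹' A : Set I01) =ᵐ[volume] (φ ⁻¹' A : Set I01) := by
        filter_upwards [hφeq] with x hx
        show (φ₀ x ∈ A) = (φ x ∈ A)
        rw [hx]
      rw [measure_congr e1, hφpres A hA.nullMeasurableSet]
    set T := fun p : I01 × I01 => (φ₀ p.1, φ₀ p.2) with hTdef
    have hT : MeasurePreserving T volume volume := by
      have h2 := hmp.prod hmp
      rw [← Measure.volume_eq_prod] at h2
      exact h2
    have hTae : AEMeasurable T volume := hT.measurable.aemeasurable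
    have hfst : (fun p : I01 × I01 => φ p.1) =ᵐ[volume] fun p => φ₀ p.1 := by
      have hq : Measure.QuasiMeasurePreserving (Prod.fst : I01 × I01 → I01) volume volume := by
        rw [Measure.volume_eq_prod]
        exact Measure.quasiMeasurePreserving_fst
      exact hq.ae_eq_comp hφeq
    have hsnd : (fun p : I01 × I01 => φ p.2) =ᵐ[volume] fun p => φ₀ p.2 := by
      have hq : Measure.QuasiMeasurePreserving (Prod.snd : I01 × I01 → I01) volume volume := by
        rw [Measure.volume_eq_prod]
        exact Measure.quasiMeasurePreserving_snd
      exact hq.ae_eq_comp hφeq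
    have hWφeq : (compMap W φ) =ᵐ[volume] fun p => W (T p) := by
      filter_upwards [hfst, hsnd] with p e1 e2
      show W (φ p.1, φ p.2) = W (φ₀ p.1, φ₀ p.2)
      rw [show φ p.1 = φ₀ p.1 from e1, show φ p.2 = φ₀ p.2 from e2]
    have hcomp_sm : AEStronglyMeasurable (compMap W φ) volume := by
      have hWT : AEMeasurable (fun p => W (T p)) volume :=
        hWm.comp_quasiMeasurePreserving hT.quasiMeasurePreserving
      exact hWT.aestronglyMeasurable.congr hWφeq.symm
    set V := fun p : I01 × I01 => U p - compMap W φ p with hV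
    have hVint : Integrable V volume := GraphonZeroAux.integrable_of_bnd (hUsm.sub hcomp_sm)
      (CU + CW) (fun p => (abs_sub _ _).trans (add_le_add (hCU p) (hCW _)))
    -- step functions
    set G := fun p : I01 × I01 =>
      f (GraphonZeroAux.rep n (GraphonZeroAux.idx n p.1),
         GraphonZeroAux.rep n (GraphonZeroAux.idx n p.2)) with hGdef
    set Hg := fun p : I01 × I01 =>
      g (GraphonZeroAux.rep n (GraphonZeroAux.idx n p.1),
         GraphonZeroAux.rep n (GraphonZeroAux.idx n p.2)) with hHgdef
    have hrep1 : Measurable fun p : I01 × I01 =>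
        GraphonZeroAux.rep n (GraphonZeroAux.idx n p.1) :=
      (Measurable.of_discrete (f := GraphonZeroAux.rep n)).comp
        ((GraphonZeroAux.measurable_idx n).comp measurable_fst)
    have hrep2 : Measurable fun p : I01 × I01 =>
        GraphonZeroAux.rep n (GraphonZeroAux.idx n p.2) :=
      (Measurable.of_discrete (f := GraphonZeroAux.rep n)).comp
        ((GraphonZeroAux.measurable_idx n).comp measurable_snd)
    have hGmeas : Measurable G := hfc.measurable.comp (hrep1.prodMk hrep2)
    have hHgmeas : Measurable Hg := hgc.measurable.comp (hrep1.prodMk hrep2)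
    obtain ⟨Cf, hCf⟩ := isCompact_univ.exists_bound_of_continuousOn hfc.continuousOn
    obtain ⟨Cg, hCg⟩ := isCompact_univ.exists_bound_of_continuousOn hgc.continuousOn
    have hGint : Integrable G volume := GraphonZeroAux.integrable_of_bnd
      hGmeas.aestronglyMeasurable Cf
      (fun p => by simpa [Real.norm_eq_abs] using hCf _ (Set.mem_univ _))
    have hHgint : Integrable Hg volume := GraphonZeroAux.integrable_of_bnd
      hHgmeas.aestronglyMeasurable Cg
      (fun p => by simpa [Real.norm_eq_abs] using hCg _ (Set.mem_univ _))
    have hHgTmeas : Measurable (fun p => Hg (T p)) := hHgmeas.comp hT.measurable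
    have hHgTint : Integrable (fun p => Hg (T p)) volume := GraphonZeroAux.integrable_of_bnd
      hHgTmeas.aestronglyMeasurable Cg
      (fun p => by simpa [Real.norm_eq_abs] using hCg _ (Set.mem_univ _))
    have hUGint : Integrable (fun p => U p - G p) volume := hUint.sub hGint
    have hGUint : Integrable (fun p => G p - U p) volume := hGint.sub hUint
    have hWHint : Integrable (fun p => compMap W φ p - Hg (T p)) volume :=
      (GraphonZeroAux.integrable_of_bnd hcomp_sm CW fun p => hCW _).sub hHgTint
    have hGHint : Integrable (fun p => G p - Hg (T p)) volume := hGint.sub hHgTint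
    have hUGabs : Integrable (fun p => |U p - G p|) volume := hUGint.abs
    have hWHabs : Integrable (fun p => |compMap W φ p - Hg (T p)|) volume := hWHint.abs
    have hGHabs : Integrable (fun p => |G p - Hg (T p)|) volume := hGHint.abs
    have hVabs : Integrable (fun p => |V p|) volume := hVint.abs
    have hGUV : Integrable (fun p => G p - U p + V p) volume := hGUint.add hVint
    have hUG_GH : Integrable (fun p => |U p - G p| + |G p - Hg (T p)|) volume :=
      hUGabs.add hGHabs
    have hsum3 : Integrable
        (fun p => |U p - G p| + |G p - Hg (T p)| + |compMap W φ p - Hg (T p)|) volume :=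
      hUG_GH.add hWHabs
    -- cells
    set κ := fun x : I01 =>
      (GraphonZeroAux.idx n x, GraphonZeroAux.idx n (φ₀ x)) with hκdef
    have hκmeas : Measurable κ := (GraphonZeroAux.measurable_idx n).prodMk
      ((GraphonZeroAux.measurable_idx n).comp hφ₀meas)
    set K := fun p : I01 × I01 => (κ p.1, κ p.2) with hKdef
    have hKmeas : Measurable K :=
      (hκmeas.comp measurable_fst).prodMk (hκmeas.comp measurable_snd)
    have hcellmeas : ∀ c : ι, MeasurableSet (K ⁻¹' {c}) :=
      fun c => hKmeas (measurableSet_singleton c)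
    have hcelleq : ∀ c : ι, K ⁻¹' {c} = (κ ⁻¹' {c.1}) ×ˢ (κ ⁻¹' {c.2}) := by
      intro c
      ext p
      simp [hKdef, Set.mem_prod, Prod.ext_iff]
    have honG : ∀ c : ι, ∀ p ∈ K ⁻¹' {c}, G p =
        f (GraphonZeroAux.rep n c.1.1, GraphonZeroAux.rep n c.2.1) := by
      intro c p hp
      have hc : K p = c := hp
      rw [← hc]
    have honH : ∀ c : ι, ∀ p ∈ K ⁻¹' {c}, Hg (T p) =
        g (GraphonZeroAux.rep n c.1.2, GraphonZeroAux.rep n c.2.2) := by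
      intro c p hp
      have hc : K p = c := hp
      rw [← hc]
    -- the per-cell estimate
    have keycell : ∀ c : ι,
        (∫ p in K ⁻¹' {c}, |V p|) ≤
          2 * (∫ p in K ⁻¹' {c}, |U p - G p|)
            + 2 * (∫ p in K ⁻¹' {c}, |compMap W φ p - Hg (T p)|) + cutNorm V := by
      intro c
      set s := K ⁻¹' {c} with hs
      have hsm : MeasurableSet s := hcellmeas c
      set a := f (GraphonZeroAux.rep n c.1.1, GraphonZeroAux.rep n c.2.1) with ha
      set b := g (GraphonZeroAux.rep n c.1.2, GraphonZeroAux.rep n c.2.2) with hb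
      set A := ∫ p in s, |U p - G p| with hA
      set B := ∫ p in s, |compMap W φ p - Hg (T p)| with hB
      set M := (volume s).toReal with hMdef
      have hM0 : 0 ≤ M := ENNReal.toReal_nonneg
      have hstep : Set.EqOn (fun p => G p - Hg (T p)) (fun _ => a - b) s := by
        intro p hp
        simp only
        rw [honG c p hp, honH c p hp]
      have hM1 : (∫ p in s, |G p - Hg (T p)|) = M * |a - b| := by
        have heq : Set.EqOn (fun p => |G p - Hg (T p)|) (fun _ => |a - b|) s := by
          intro p hp
          simp only
          rw [honG c p hp, honH c p hp]
        rw [setIntegral_congr_fun hsm heq, setIntegral_const, smul_eq_mul]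
        rfl
      have hM2 : (∫ p in s, (G p - Hg (T p))) = M * (a - b) := by
        rw [setIntegral_congr_fun hsm hstep, setIntegral_const, smul_eq_mul]
        rfl
      have habs : ∀ F : I01 × I01 → ℝ, |∫ p in s, F p| ≤ ∫ p in s, |F p| := fun F => by
        simpa [Real.norm_eq_abs] using
          norm_integral_le_integral_norm (μ := volume.restrict s) F
      have hcut : |∫ p in s, V p| ≤ cutNorm V := by
        rw [hs, hcelleq c]
        exact GraphonZeroAux.le_cutNorm hVint
          ((hκmeas (measurableSet_singleton _)).nullMeasurableSet)
          ((hκmeas (measurableSet_singleton _)).nullMeasurableSet)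
      have hsplit : (∫ p in s, (G p - Hg (T p))) =
          (∫ p in s, (G p - U p)) + (∫ p in s, V p)
            + (∫ p in s, (compMap W φ p - Hg (T p))) := by
        have e0 : (fun p : I01 × I01 => G p - Hg (T p)) =
            fun p => G p - U p + V p + (compMap W φ p - Hg (T p)) := by
          funext p
          simp only [hV]
          ring
        rw [e0, integral_add (hGUV.restrict) (hWHint.restrict),
          integral_add (hGUint.restrict) (hVint.restrict)]
      have hGU : |∫ p in s, (G p - U p)| ≤ A := by
        refine (habs _).trans ?_
        rw [hA]
        apply le_of_eq
        congr 1
        funext p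
        rw [abs_sub_comm]
      have hWHcell : |∫ p in s, (compMap W φ p - Hg (T p))| ≤ B := habs _
      have hMle : M * |a - b| ≤ A + cutNorm V + B := by
        calc M * |a - b| = |M * (a - b)| := by rw [abs_mul, abs_of_nonneg hM0]
          _ = |∫ p in s, (G p - Hg (T p))| := by rw [hM2]
          _ ≤ |∫ p in s, (G p - U p)| + |∫ p in s, V p|
              + |∫ p in s, (compMap W φ p - Hg (T p))| := by
            rw [hsplit]
            exact (abs_add_le _ _).trans (add_le_add_left (abs_add_le _ _) _)
          _ ≤ A + cutNorm V + B := add_le_add (add_le_add hGU hcut) hWHcell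
      have hpt : ∀ p ∈ s, |V p| ≤ |U p - G p| + |G p - Hg (T p)|
          + |compMap W φ p - Hg (T p)| := by
        intro p _
        have h1 : |V p| ≤ |U p - G p| + |G p - compMap W φ p| := abs_sub_le _ _ _
        have h2 : |G p - compMap W φ p| ≤ |G p - Hg (T p)| + |Hg (T p) - compMap W φ p| :=
          abs_sub_le _ _ _
        rw [abs_sub_comm (Hg (T p))] at h2
        linarith
      calc (∫ p in s, |V p|) ≤
          ∫ p in s, (|U p - G p| + |G p - Hg (T p)| + |compMap W φ p - Hg (T p)|) := by
            apply setIntegral_mono_on (hVabs.restrict) (hsum3.restrict) hsm hpt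
        _ = A + M * |a - b| + B := by
            rw [integral_add (hUG_GH.restrict) (hWHabs.restrict),
              integral_add (hUGabs.restrict) (hGHabs.restrict), hM1]
        _ ≤ A + (A + cutNorm V + B) + B := by linarith
        _ = 2 * A + 2 * B + cutNorm V := by ring
    -- summing over the cells
    have hsumV : (∫ p, |V p|) = ∑ c : ι, ∫ p in K ⁻¹' {c}, |V p| :=
      GraphonZeroAux.integral_eq_sum_cells hKmeas hVabs
    have hsumA : (∫ p, |U p - G p|) = ∑ c : ι, ∫ p in K ⁻¹' {c}, |U p - G p| :=
      GraphonZeroAux.integral_eq_sum_cells hKmeas hUGabs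
    have hsumB : (∫ p, |compMap W φ p - Hg (T p)|)
        = ∑ c : ι, ∫ p in K ⁻¹' {c}, |compMap W φ p - Hg (T p)| :=
      GraphonZeroAux.integral_eq_sum_cells hKmeas hWHabs
    have htot : (∫ p, |V p|) ≤ 2 * (∫ p, |U p - G p|)
        + 2 * (∫ p, |compMap W φ p - Hg (T p)|) + (Nc : ℝ) * cutNorm V := by
      rw [hsumV, hsumA, hsumB]
      calc (∑ c : ι, ∫ p in K ⁻¹' {c}, |V p|)
          ≤ ∑ c : ι, (2 * (∫ p in K ⁻¹' {c}, |U p - G p|)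
            + 2 * (∫ p in K ⁻¹' {c}, |compMap W φ p - Hg (T p)|) + cutNorm V) :=
            Finset.sum_le_sum fun c _ => keycell c
        _ = 2 * (∑ c : ι, ∫ p in K ⁻¹' {c}, |U p - G p|)
            + 2 * (∑ c : ι, ∫ p in K ⁻¹' {c}, |compMap W φ p - Hg (T p)|)
            + (Nc : ℝ) * cutNorm V := by
            rw [Finset.sum_add_distrib, Finset.sum_add_distrib, ← Finset.mul_sum,
              ← Finset.mul_sum, Finset.sum_const, Finset.card_univ, nsmul_eq_mul, hNc]
    -- the L¹ bounds for the two approximations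
    have hfG : ∀ p : I01 × I01, |f p - G p| ≤ δ := by
      intro p
      have hd : dist p (GraphonZeroAux.rep n (GraphonZeroAux.idx n p.1),
          GraphonZeroAux.rep n (GraphonZeroAux.idx n p.2)) < df := by
        rw [Prod.dist_eq]
        exact lt_of_le_of_lt
          (max_le (GraphonZeroAux.dist_rep_idx n p.1) (GraphonZeroAux.dist_rep_idx n p.2)) hnf
      have := hdf hd
      rw [Real.dist_eq] at this
      exact this.le
    have hgH : ∀ q : I01 × I01, |g q - Hg q| ≤ δ := by
      intro q
      have hd : dist q (GraphonZeroAux.rep n (GraphonZeroAux.idx n q.1),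
          GraphonZeroAux.rep n (GraphonZeroAux.idx n q.2)) < dg := by
        rw [Prod.dist_eq]
        exact lt_of_le_of_lt
          (max_le (GraphonZeroAux.dist_rep_idx n q.1) (GraphonZeroAux.dist_rep_idx n q.2)) hng
      have := hdg hd
      rw [Real.dist_eq] at this
      exact this.le
    have hfU' : (∫ p, |U p - f p|) ≤ δ := by
      simpa [Real.norm_eq_abs] using hfU
    have hgW' : (∫ q, |W q - g q|) ≤ δ := by
      simpa [Real.norm_eq_abs] using hgW
    have hAtot : (∫ p, |U p - G p|) ≤ 2 * δ := by
      have hpt : ∀ p, |U p - G p| ≤ |U p - f p| + δ := fun p => by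
        have h1 : |U p - G p| ≤ |U p - f p| + |f p - G p| := abs_sub_le _ _ _
        linarith [hfG p]
      have hUfabs : Integrable (fun p => |U p - f p|) volume := (hUint.sub hfint).abs
      calc (∫ p, |U p - G p|) ≤ ∫ p, (|U p - f p| + δ) :=
            integral_mono hUGabs (hUfabs.add (integrable_const δ)) hpt
        _ = (∫ p, |U p - f p|) + δ := by
            rw [integral_add hUfabs (integrable_const δ), integral_const,
              probReal_univ, one_smul]
        _ ≤ 2 * δ := by linarith
    have hBtot : (∫ p, |compMap W φ p - Hg (T p)|) ≤ 2 * δ := by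
      have e1 : (∫ p, |compMap W φ p - Hg (T p)|) = ∫ p, |W (T p) - Hg (T p)| :=
        integral_congr_ae (by filter_upwards [hWφeq] with p hp; rw [hp])
      have hWHgint : Integrable (fun q => W q - Hg q) volume := hWint.sub hHgint
      have hsm2 : AEStronglyMeasurable (fun q => |W q - Hg q|) (Measure.map T volume) := by
        rw [hT.map_eq]
        exact hWHgint.abs.aestronglyMeasurable
      have e2 : (∫ p, |W (T p) - Hg (T p)|) = ∫ q, |W q - Hg q| := by
        calc (∫ p, |W (T p) - Hg (T p)|)
            = ∫ q, |W q - Hg q| ∂(Measure.map T volume) := (integral_map hTae hsm2).symm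
          _ = ∫ q, |W q - Hg q| := by rw [hT.map_eq]
      have hpt : ∀ q, |W q - Hg q| ≤ |W q - g q| + δ := fun q => by
        have h1 : |W q - Hg q| ≤ |W q - g q| + |g q - Hg q| := abs_sub_le _ _ _
        linarith [hgH q]
      have hWgabs : Integrable (fun q => |W q - g q|) volume := (hWint.sub hgint).abs
      have hWHgabs : Integrable (fun q => |W q - Hg q|) volume := hWHgint.abs
      calc (∫ p, |compMap W φ p - Hg (T p)|) = ∫ q, |W q - Hg q| := by rw [e1, e2]
        _ ≤ ∫ q, (|W q - g q| + δ) :=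
            integral_mono hWHgabs (hWgabs.add (integrable_const δ)) hpt
        _ = (∫ q, |W q - g q|) + δ := by
            rw [integral_add hWgabs (integrable_const δ), integral_const,
              probReal_univ, one_smul]
        _ ≤ 2 * δ := by linarith
    -- put everything together
    have hNccut : (Nc : ℝ) * cutNorm V < δ := by
      have hcutlt : cutNorm V < η := hr0lt
      calc (Nc : ℝ) * cutNorm V < (Nc : ℝ) * η := by
            exact mul_lt_mul_of_pos_left hcutlt hNcpos
        _ = δ := by
            rw [hη]
            field_simp
    refine ⟨l1Norm V, ⟨φ, hφ0, rfl⟩, ?_⟩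
    have hl1 : l1Norm V = ∫ p, |V p| := rfl
    rw [hl1]
    have hcn0 : 0 ≤ cutNorm V := GraphonZeroAux.cutNorm_nonneg V
    rw [hδ] at hAtot hBtot hNccut
    linarith [htot]
  -- conclude that the infimum is zero
  have hbdd1 : BddBelow {r : ℝ | ∃ φ : I01 → I01, MPhi0 φ ∧
      r = l1Norm (fun p => U p - compMap W φ p)} := ⟨0, by
    rintro r ⟨ψ, -, rfl⟩
    exact integral_nonneg fun p => abs_nonneg _⟩
  have hne1 : {r : ℝ | ∃ φ : I01 → I01, MPhi0 φ ∧
      r = l1Norm (fun p => U p - compMap W φ p)}.Nonempty := by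
    obtain ⟨r, hr, -⟩ := key 1 one_pos
    exact ⟨r, hr⟩
  apply le_antisymm
  · by_contra hc
    push_neg at hc
    obtain ⟨r, hr, hrlt⟩ := key _ hc
    exact absurd (csInf_le hbdd1 hr) (not_le.mpr hrlt)
  · exact le_csInf hne1 (by
      rintro r ⟨ψ, -, rfl⟩
      exact integral_nonneg fun p => abs_nonneg _)

end
end

section
/- Let W be a graphon with values in [0,1] such that W(x,y) ∈ {0,1} for almost every (x,y) ∈ I², and let W₁, W₂, … be graphons with values in [0,1] such that δ_□(W_n, W) → 0 as n → ∞. Then δ₁(W_n, W) → 0 as n → ∞. -/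
open MeasureTheory Set
open scoped symmDiff

noncomputable section

namespace GraphonAux


/-- Indicators of measurable rectangles. -/
def RectSet : Set ((I01 × I01) → ℝ) :=
  {f | ∃ A B : Set I01, MeasurableSet A ∧ MeasurableSet B ∧ f = (A ×ˢ B).indicator 1}

/-- The span of rectangle indicators. -/
def RSpan : Submodule ℝ ((I01 × I01) → ℝ) := Submodule.span ℝ RectSet

lemma mul_mem_RSpan {f g : (I01 × I01) → ℝ} (hf : f ∈ RSpan) (hg : g ∈ RSpan) :
    f * g ∈ RSpan := by
  induction hf using Submodule.span_induction generalizing g with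
  | mem x hx =>
    induction hg using Submodule.span_induction with
    | mem y hy =>
      obtain ⟨A, B, hA, hB, rfl⟩ := hx
      obtain ⟨C, D, hC, hD, rfl⟩ := hy
      refine Submodule.subset_span ⟨A ∩ C, B ∩ D, hA.inter hC, hB.inter hD, ?_⟩
      funext p
      by_cases h1 : p.1 ∈ A <;> by_cases h2 : p.2 ∈ B <;> by_cases h3 : p.1 ∈ C <;>
        by_cases h4 : p.2 ∈ D <;>
        simp [Set.indicator_apply, Set.mem_prod, h1, h2, h3, h4]
    | zero => simpa using zero_mem RSpan
    | add y z hy hz ihy ihz => rw [mul_add]; exact add_mem ihy ihz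
    | smul a y hy ihy => rw [mul_smul_comm]; exact Submodule.smul_mem _ a ihy
  | zero => rw [zero_mul]; exact zero_mem _
  | add x y hx hy ihx ihy => rw [add_mul]; exact add_mem (ihx hg) (ihy hg)
  | smul a x hx ih => rw [smul_mul_assoc]; exact Submodule.smul_mem _ a (ih hg)

/-- Sets whose indicator lies in the span of rectangle indicators. -/
def Alg : Set (Set (I01 × I01)) :=
  {t | MeasurableSet t ∧ t.indicator (1 : (I01 × I01) → ℝ) ∈ RSpan}

lemma isSetAlgebra_Alg : IsSetAlgebra Alg where
  empty_mem := ⟨.empty, by rw [Set.indicator_empty]; exact zero_mem _⟩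
  compl_mem s hs := by
    refine ⟨hs.1.compl, ?_⟩
    have h : sᶜ.indicator (1 : (I01 × I01) → ℝ) =
        Set.univ.indicator 1 - s.indicator 1 := by
      funext p; by_cases h : p ∈ s <;> simp [h]
    rw [h]
    exact sub_mem (Submodule.subset_span
      ⟨univ, univ, .univ, .univ, by rw [univ_prod_univ]⟩) hs.2
  union_mem s t hs ht := by
    refine ⟨hs.1.union ht.1, ?_⟩
    have h : (s ∪ t).indicator (1 : (I01 × I01) → ℝ) =
        s.indicator 1 + t.indicator 1 - s.indicator 1 * t.indicator 1 := by
      funext p; by_cases h1 : p ∈ s <;> by_cases h2 : p ∈ t <;> simp [h1, h2]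
    rw [h]
    exact sub_mem (add_mem hs.2 ht.2) (mul_mem_RSpan hs.2 ht.2)

lemma generateFrom_Alg :
    (inferInstance : MeasurableSpace (I01 × I01)) = MeasurableSpace.generateFrom Alg := by
  apply le_antisymm
  · rw [show (inferInstance : MeasurableSpace (I01 × I01)) = Prod.instMeasurableSpace from rfl,
      ← generateFrom_prod]
    apply MeasurableSpace.generateFrom_mono
    rintro u ⟨A, hA, B, hB, rfl⟩
    simp only [Set.mem_setOf_eq] at hA hB
    exact ⟨hA.prod hB, Submodule.subset_span ⟨A, B, hA, hB, rfl⟩⟩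
  · exact MeasurableSpace.generateFrom_le fun t ht => ht.1

lemma measureDense_Alg : (volume : Measure (I01 × I01)).MeasureDense Alg :=
  .of_generateFrom_isSetAlgebra_finite volume isSetAlgebra_Alg generateFrom_Alg


lemma integrable_of_abs_le {f : I01 × I01 → ℝ} (hf : AEMeasurable f volume) {C : ℝ}
    (h : ∀ p, |f p| ≤ C) : Integrable f volume :=
  ⟨hf.aestronglyMeasurable,
    HasFiniteIntegral.of_bounded (C := C) (Filter.Eventually.of_forall fun p => by
      simpa [Real.norm_eq_abs] using h p)⟩

lemma integrable_of_mem_RSpan {f : (I01 × I01) → ℝ} (hf : f ∈ RSpan) :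
    Integrable f volume := by
  induction hf using Submodule.span_induction with
  | mem x hx =>
    obtain ⟨A, B, hA, hB, rfl⟩ := hx
    exact (integrable_const (1 : ℝ)).indicator (hA.prod hB)
  | zero => exact integrable_zero _ _ _
  | add x y hx hy ihx ihy => exact ihx.add ihy
  | smul a x hx ih => exact ih.smul a


lemma indicator_approx (E : Set (I01 × I01)) (hE : MeasurableSet E) {ε : ℝ} (hε : 0 < ε) :
    ∃ g ∈ RSpan, ∫ p, |E.indicator 1 p - g p| < ε := by
  obtain ⟨t, ht, hlt⟩ := measureDense_Alg.approx E hE (measure_ne_top _ _) ε hε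
  refine ⟨t.indicator 1, ht.2, ?_⟩
  have hpt : ∀ p, |E.indicator (1 : (I01 × I01) → ℝ) p - t.indicator 1 p|
      = (E ∆ t).indicator 1 p := by
    intro p
    by_cases h1 : p ∈ E <;> by_cases h2 : p ∈ t <;>
      simp [Set.indicator_apply, h1, h2, Set.mem_symmDiff]
  calc ∫ p, |E.indicator (1 : (I01 × I01) → ℝ) p - t.indicator 1 p|
      = ∫ p, (E ∆ t).indicator 1 p := by simp_rw [hpt]
    _ = (volume (E ∆ t)).toReal := integral_indicator_one (hE.symmDiff ht.1)
    _ < ε := ENNReal.toReal_lt_of_lt_ofReal hlt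

lemma simpleFunc_approx (s : SimpleFunc (I01 × I01) ℝ) :
    ∀ ε : ℝ, 0 < ε → ∃ g ∈ RSpan, ∫ p, |s p - g p| < ε := by
  induction s using MeasureTheory.SimpleFunc.induction with
  | const c hs =>
    rename_i E
    intro ε hε
    obtain ⟨g, hg, hlt⟩ := indicator_approx E hs (ε := ε / (|c| + 1))
      (by positivity)
    refine ⟨c • g, Submodule.smul_mem _ _ hg, ?_⟩
    have h1 : ∀ p, |(SimpleFunc.piecewise E hs (SimpleFunc.const _ c)
        (SimpleFunc.const _ 0)) p - (c • g) p| = |c| * |E.indicator 1 p - g p| := by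
      intro p
      by_cases h : p ∈ E
      · simp only [SimpleFunc.piecewise_apply, if_pos h, SimpleFunc.coe_const,
          Function.const_apply, Pi.smul_apply, smul_eq_mul, Set.indicator_of_mem h, Pi.one_apply]
        rw [show c - c * g p = c * (1 - g p) by ring, abs_mul]
      · simp only [SimpleFunc.piecewise_apply, if_neg h, SimpleFunc.coe_const,
          Function.const_apply, Pi.smul_apply, smul_eq_mul, Set.indicator_of_notMem h]
        rw [show (0:ℝ) - c * g p = c * (0 - g p) by ring, abs_mul]
    have h0 : 0 ≤ ∫ p, |E.indicator (1 : (I01 × I01) → ℝ) p - g p| :=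
      integral_nonneg fun p => abs_nonneg _
    calc ∫ p, |(SimpleFunc.piecewise E hs (SimpleFunc.const _ c)
          (SimpleFunc.const _ 0)) p - (c • g) p|
        = |c| * ∫ p, |E.indicator 1 p - g p| := by simp_rw [h1]; exact integral_const_mul _ _
      _ ≤ |c| * (ε / (|c| + 1)) := mul_le_mul_of_nonneg_left hlt.le (abs_nonneg c)
      _ < ε := by
          have h := abs_nonneg c
          rw [mul_comm, div_mul_eq_mul_div, div_lt_iff₀ (by positivity : (0:ℝ) < |c| + 1)]
          nlinarith
  | @add f g hdisj ihf ihg =>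
    intro ε hε
    obtain ⟨g1, hg1, h1⟩ := ihf (ε / 2) (by positivity)
    obtain ⟨g2, hg2, h2⟩ := ihg (ε / 2) (by positivity)
    refine ⟨g1 + g2, add_mem hg1 hg2, ?_⟩
    obtain ⟨C1, hC1⟩ := f.exists_forall_norm_le
    obtain ⟨C2, hC2⟩ := g.exists_forall_norm_le
    have hfi : Integrable (⇑f) volume := integrable_of_abs_le
      f.measurable.aemeasurable (C := C1) (fun p => by simpa [Real.norm_eq_abs] using hC1 p)
    have hgi : Integrable (⇑g) volume := integrable_of_abs_le
      g.measurable.aemeasurable (C := C2) (fun p => by simpa [Real.norm_eq_abs] using hC2 p)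
    have hg1i := integrable_of_mem_RSpan hg1
    have hg2i := integrable_of_mem_RSpan hg2
    calc ∫ p, |(f + g) p - (g1 + g2) p|
        ≤ ∫ p, (|f p - g1 p| + |g p - g2 p|) := by
          apply integral_mono ((((hfi.add hgi).sub (hg1i.add hg2i)).abs))
            (((hfi.sub hg1i).abs).add ((hgi.sub hg2i).abs))
          intro p
          simp only [SimpleFunc.coe_add, Pi.add_apply]
          calc |f p + g p - (g1 p + g2 p)| = |(f p - g1 p) + (g p - g2 p)| := by ring_nf
            _ ≤ |f p - g1 p| + |g p - g2 p| := abs_add_le _ _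
      _ = (∫ p, |f p - g1 p|) + ∫ p, |g p - g2 p| :=
          integral_add ((hfi.sub hg1i).abs) ((hgi.sub hg2i).abs)
      _ < ε / 2 + ε / 2 := add_lt_add h1 h2
      _ = ε := by ring


/-- A function in `RSpan` can be `L¹`-approximated from a bounded a.e.-measurable function. -/
lemma exists_RSpan_approx (W : I01 × I01 → ℝ) (hmeas : AEMeasurable W volume)
    {C : ℝ} (hbd : ∀ p, |W p| ≤ C) {ε : ℝ} (hε : 0 < ε) :
    ∃ g ∈ RSpan, ∫ p, |W p - g p| < ε := by
  set W0 := hmeas.mk W with hW0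
  have hW0m : Measurable W0 := hmeas.measurable_mk
  have hae : W =ᵐ[volume] W0 := hmeas.ae_eq_mk
  have hW0i : Integrable W0 volume := by
    refine ⟨hW0m.aestronglyMeasurable, HasFiniteIntegral.of_bounded (C := C) ?_⟩
    filter_upwards [hae] with p hp
    rw [Real.norm_eq_abs, ← hp]; exact hbd p
  -- approximate W0 by a simple function in L¹
  have htend := MeasureTheory.SimpleFunc.tendsto_approxOn_range_L1_enorm
    hW0m hW0i
  have hev := htend.eventually_lt_const
    (by simp [ENNReal.ofReal_pos, hε] : (0 : ENNReal) < ENNReal.ofReal (ε / 2))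
  obtain ⟨n, hn⟩ := hev.exists
  set s := MeasureTheory.SimpleFunc.approxOn W0 hW0m (Set.range W0 ∪ {0}) 0 (by simp) n
  obtain ⟨g, hg, hgl⟩ := simpleFunc_approx s (ε / 2) (by positivity)
  refine ⟨g, hg, ?_⟩
  obtain ⟨Cs, hCs⟩ := s.exists_forall_norm_le
  have hsi : Integrable (⇑s) volume := integrable_of_abs_le s.measurable.aemeasurable
    (C := Cs) (fun p => by simpa [Real.norm_eq_abs] using hCs p)
  have hgi := integrable_of_mem_RSpan hg
  have hs_half : ∫ p, |W0 p - s p| < ε / 2 := by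
    have heq : ∫ p, |W0 p - s p| = (∫⁻ p, ‖s p - W0 p‖ₑ ∂volume).toReal := by
      rw [show (fun p => |W0 p - s p|) = fun p => ‖s p - W0 p‖ by
        funext p; rw [Real.norm_eq_abs, abs_sub_comm]]
      exact integral_norm_eq_lintegral_enorm (f := fun p => s p - W0 p)
        ((hsi.sub hW0i).aestronglyMeasurable)
    rw [heq]
    exact ENNReal.toReal_lt_of_lt_ofReal hn
  calc ∫ p, |W p - g p| = ∫ p, |W0 p - g p| := by
        apply integral_congr_ae
        filter_upwards [hae] with p hp
        rw [hp]
    _ ≤ ∫ p, (|W0 p - s p| + |s p - g p|) := by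
        apply integral_mono ((hW0i.sub hgi).abs)
          (((hW0i.sub hsi).abs).add ((hsi.sub hgi).abs))
        intro p
        calc |W0 p - g p| = |(W0 p - s p) + (s p - g p)| := by ring_nf
          _ ≤ |W0 p - s p| + |s p - g p| := abs_add_le _ _
    _ = (∫ p, |W0 p - s p|) + ∫ p, |s p - g p| :=
        integral_add ((hW0i.sub hsi).abs) ((hsi.sub hgi).abs)
    _ < ε / 2 + ε / 2 := add_lt_add hs_half hgl
    _ = ε := by ring

/-- Explicit form: approximation by a finite combination of rectangle indicators. -/
lemma exists_rect_combo_approx (W : I01 × I01 → ℝ) (hmeas : AEMeasurable W volume)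
    {C : ℝ} (hbd : ∀ p, |W p| ≤ C) {ε : ℝ} (hε : 0 < ε) :
    ∃ (k : ℕ) (c : Fin k → ℝ) (A B : Fin k → Set I01),
      (∀ i, MeasurableSet (A i)) ∧ (∀ i, MeasurableSet (B i)) ∧
      ∫ p, |W p - ∑ i, c i * (A i ×ˢ B i).indicator 1 p| < ε := by
  obtain ⟨g, hg, hlt⟩ := exists_RSpan_approx W hmeas hbd hε
  obtain ⟨k, c, v, hsum⟩ := Submodule.mem_span_set'.mp hg
  choose A B hA hB hv using fun i : Fin k => (v i).2
  refine ⟨k, c, A, B, hA, hB, ?_⟩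
  have hgp : ∀ p, g p = ∑ i, c i * (A i ×ˢ B i).indicator 1 p := by
    intro p
    rw [← hsum]
    rw [Finset.sum_apply]
    exact Finset.sum_congr rfl fun i _ => by rw [Pi.smul_apply, smul_eq_mul, hv i]
  simpa only [← hgp] using hlt


lemma abs_setIntegral_le_cutNorm {f : I01 × I01 → ℝ} (hf : Integrable f volume)
    {S T : Set I01} (hS : NullMeasurableSet S volume) (hT : NullMeasurableSet T volume) :
    |∫ p in S ×ˢ T, f p| ≤ cutNorm f := by
  have hub : BddAbove { r : ℝ | ∃ S T : Set I01, NullMeasurableSet S volume ∧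
      NullMeasurableSet T volume ∧ r = |∫ p in S ×ˢ T, f p| } := by
    refine ⟨∫ p, |f p|, ?_⟩
    rintro r ⟨S', T', hS', hT', rfl⟩
    calc |∫ p in S' ×ˢ T', f p| ≤ ∫ p in S' ×ˢ T', |f p| := by
          simpa [Real.norm_eq_abs] using
            norm_integral_le_integral_norm (μ := volume.restrict (S' ×ˢ T')) f
      _ ≤ ∫ p, |f p| := setIntegral_le_integral hf.abs
          (Filter.Eventually.of_forall fun p => abs_nonneg _)
  exact le_csSup hub ⟨S, T, hS, hT, rfl⟩

lemma abs_integral_le_cutNorm {f : I01 × I01 → ℝ} (hf : Integrable f volume) :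
    |∫ p, f p| ≤ cutNorm f := by
  have h := abs_setIntegral_le_cutNorm hf
    (MeasurableSet.univ.nullMeasurableSet) (MeasurableSet.univ.nullMeasurableSet)
  rwa [Set.univ_prod_univ, Measure.restrict_univ] at h

lemma cutNorm_congr {f g : I01 × I01 → ℝ} (h : f =ᵐ[volume] g) : cutNorm f = cutNorm g := by
  unfold cutNorm
  congr 1
  ext r
  constructor
  · rintro ⟨S, T, hS, hT, rfl⟩
    exact ⟨S, T, hS, hT, by rw [integral_congr_ae (ae_restrict_of_ae h)]⟩
  · rintro ⟨S, T, hS, hT, rfl⟩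
    exact ⟨S, T, hS, hT, by rw [integral_congr_ae (ae_restrict_of_ae h.symm)]⟩

lemma l1Norm_congr {f g : I01 × I01 → ℝ} (h : f =ᵐ[volume] g) : l1Norm f = l1Norm g := by
  unfold l1Norm
  apply integral_congr_ae
  filter_upwards [h] with p hp
  rw [hp]

lemma exists_measurable_rep {φ : I01 → I01} (h : MPhi φ) :
    ∃ φ' : I01 → I01, Measurable φ' ∧ φ =ᵐ[volume] φ' ∧
      MeasurePreserving φ' volume volume := by
  refine ⟨h.1.mk φ, h.1.measurable_mk, h.1.ae_eq_mk, h.1.measurable_mk, ?_⟩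
  apply Measure.ext fun A hA => ?_
  rw [Measure.map_apply h.1.measurable_mk hA]
  have h1 : φ ⁻¹' A =ᵐ[volume] (h.1.mk φ) ⁻¹' A := h.1.ae_eq_mk.preimage A
  rw [← measure_congr h1, h.2 A hA.nullMeasurableSet]

lemma pair_measurePreserving {φ' : I01 → I01} (h : MeasurePreserving φ' volume volume) :
    MeasurePreserving (Prod.map φ' φ') (volume : Measure (I01 × I01)) volume := by
  rw [Measure.volume_eq_prod]
  exact h.prod h

lemma compMap_ae_eq {φ φ' : I01 → I01} (h : φ =ᵐ[volume] φ') (W : I01 × I01 → ℝ) :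
    compMap W φ =ᵐ[volume] fun p => W (φ' p.1, φ' p.2) := by
  have hN : volume {x : I01 | ¬ φ x = φ' x} = 0 := ae_iff.mp h
  set M := toMeasurable volume {x : I01 | ¬ φ x = φ' x} with hMdef
  have hM : volume M = 0 := by rw [measure_toMeasurable]; exact hN
  have hMm : MeasurableSet M := measurableSet_toMeasurable _ _
  rw [Filter.EventuallyEq, ae_iff]
  have hsub : {p : I01 × I01 | ¬ compMap W φ p = W (φ' p.1, φ' p.2)} ⊆
      (M ×ˢ (univ : Set I01)) ∪ ((univ : Set I01) ×ˢ M) := by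
    intro p hp
    simp only [Set.mem_setOf_eq] at hp
    by_contra hc
    simp only [Set.mem_union, Set.mem_prod, Set.mem_univ, and_true, true_and, not_or] at hc
    have h1 : φ p.1 = φ' p.1 := by
      by_contra h1; exact hc.1 (subset_toMeasurable _ _ h1)
    have h2 : φ p.2 = φ' p.2 := by
      by_contra h2; exact hc.2 (subset_toMeasurable _ _ h2)
    exact hp (by rw [compMap, h1, h2])
  have hz : volume ((M ×ˢ (univ : Set I01)) ∪ ((univ : Set I01) ×ˢ M)) = 0 := by
    apply measure_union_null <;>
      rw [Measure.volume_eq_prod, Measure.prod_prod] <;> simp [hM]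
  exact measure_mono_null hsub hz


lemma key_estimate (U V : I01 × I01 → ℝ) (hU : AEMeasurable U volume)
    (hV : AEMeasurable V volume)
    (hU01 : ∀ p, U p ∈ Icc (0:ℝ) 1) (hV01 : ∀ p, V p ∈ Icc (0:ℝ) 1)
    (hV01ae : ∀ᵐ p ∂(volume : Measure (I01 × I01)), V p = 0 ∨ V p = 1)
    {k : ℕ} (c : Fin k → ℝ) (A B : Fin k → Set I01)
    (hA : ∀ i, MeasurableSet (A i)) (hB : ∀ i, MeasurableSet (B i))
    {ε : ℝ}
    (happ : ∫ p, |V p - ∑ i, c i * (A i ×ˢ B i).indicator 1 p| ≤ ε) :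
    ∫ p, |U p - V p| ≤
      (1 + 2 * ∑ i, |c i|) * cutNorm (fun p => U p - V p) + 4 * ε := by
  set F : I01 × I01 → ℝ := fun p => ∑ i, c i * (A i ×ˢ B i).indicator 1 p with hFdef
  set K : ℝ := ∑ i, |c i| with hKdef
  set d : ℝ := cutNorm (fun p => U p - V p) with hddef
  -- basic bounds and integrability
  have hUb : ∀ p, |U p| ≤ 1 := fun p => abs_le.mpr ⟨by linarith [(hU01 p).1], (hU01 p).2⟩
  have hVb : ∀ p, |V p| ≤ 1 := fun p => abs_le.mpr ⟨by linarith [(hV01 p).1], (hV01 p).2⟩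
  have hFm : Measurable F := by
    apply Finset.measurable_sum
    intro i _
    exact (measurable_const.indicator ((hA i).prod (hB i))).const_mul _
  have hFb : ∀ p, |F p| ≤ K := by
    intro p
    calc |F p| ≤ ∑ i, |c i * (A i ×ˢ B i).indicator 1 p| := Finset.abs_sum_le_sum_abs _ _
      _ ≤ ∑ i, |c i| := by
          apply Finset.sum_le_sum
          intro i _
          rw [abs_mul]
          by_cases h : p ∈ A i ×ˢ B i <;>
            simp [Set.indicator_of_mem, Set.indicator_of_notMem, h, abs_nonneg]
  have hUi : Integrable U volume := integrable_of_abs_le hU hUb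
  have hVi : Integrable V volume := integrable_of_abs_le hV hVb
  have hFi : Integrable F volume := integrable_of_abs_le hFm.aemeasurable hFb
  have hUVi : Integrable (fun p => U p - V p) volume := hUi.sub hVi
  have hUVm : AEMeasurable (fun p => U p * V p) volume := hU.mul hV
  have hUVmi : Integrable (fun p => U p * V p) volume :=
    integrable_of_abs_le hUVm (C := 1) (fun p => by
      rw [abs_mul]
      calc |U p| * |V p| ≤ 1 * 1 := mul_le_mul (hUb p) (hVb p) (abs_nonneg _) zero_le_one
        _ = 1 := by ring)
  have hUFi : Integrable (fun p => U p * F p) volume :=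
    integrable_of_abs_le (hU.mul hFm.aemeasurable) (C := K) (fun p => by
      rw [abs_mul]
      calc |U p| * |F p| ≤ 1 * K := mul_le_mul (hUb p) (hFb p) (abs_nonneg _) zero_le_one
        _ = K := by ring)
  have hVFi : Integrable (fun p => V p * F p) volume :=
    integrable_of_abs_le (hV.mul hFm.aemeasurable) (C := K) (fun p => by
      rw [abs_mul]
      calc |V p| * |F p| ≤ 1 * K := mul_le_mul (hVb p) (hFb p) (abs_nonneg _) zero_le_one
        _ = K := by ring)
  have hVVi : Integrable (fun p => V p * V p) volume :=
    integrable_of_abs_le (hV.mul hV) (C := 1) (fun p => by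
      rw [abs_mul]
      calc |V p| * |V p| ≤ 1 * 1 := mul_le_mul (hVb p) (hVb p) (abs_nonneg _) zero_le_one
        _ = 1 := by ring)
  have hVFdiffi : Integrable (fun p => V p - F p) volume := hVi.sub hFi
  have hε0 : 0 ≤ ε := le_trans (integral_nonneg fun p => abs_nonneg _) happ
  -- (1) ∫ U - ∫ V ≤ d
  have h1 : (∫ p, U p) - (∫ p, V p) ≤ d := by
    have := abs_integral_le_cutNorm hUVi
    rw [integral_sub hUi hVi] at this
    exact le_trans (le_abs_self _) this
  -- (3) |∫ (U - V) * F| ≤ K * d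
  have h3 : |∫ p, (U p - V p) * F p| ≤ K * d := by
    have heq : (fun p => (U p - V p) * F p)
        = fun p => ∑ i, c i * ((A i ×ˢ B i).indicator (fun q => U q - V q) p) := by
      funext p
      rw [hFdef, Finset.mul_sum]
      apply Finset.sum_congr rfl
      intro i _
      by_cases h : p ∈ A i ×ˢ B i <;>
        simp [Set.indicator_of_mem, Set.indicator_of_notMem, h] <;> ring
    have hterm : ∀ i : Fin k, Integrable
        (fun p => c i * ((A i ×ˢ B i).indicator (fun q => U q - V q) p)) volume :=
      fun i => ((hUVi.indicator ((hA i).prod (hB i))).const_mul _)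
    rw [heq, integral_finset_sum _ (fun i _ => hterm i)]
    calc |∑ i, ∫ p, c i * ((A i ×ˢ B i).indicator (fun q => U q - V q) p)|
        ≤ ∑ i, |∫ p, c i * ((A i ×ˢ B i).indicator (fun q => U q - V q) p)| :=
          Finset.abs_sum_le_sum_abs _ _
      _ ≤ ∑ i, |c i| * d := by
          apply Finset.sum_le_sum
          intro i _
          rw [integral_const_mul, abs_mul]
          apply mul_le_mul_of_nonneg_left _ (abs_nonneg _)
          rw [integral_indicator ((hA i).prod (hB i))]
          exact abs_setIntegral_le_cutNorm hUVi
            ((hA i).nullMeasurableSet) ((hB i).nullMeasurableSet)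
      _ = K * d := by rw [hKdef, Finset.sum_mul]
  -- (4) |∫ U*F - ∫ U*V| ≤ ε
  have hptwise : ∀ p, |V p - F p| ≤ |V p - F p| := fun p => le_refl _
  have h4 : |(∫ p, U p * F p) - ∫ p, U p * V p| ≤ ε := by
    rw [← integral_sub hUFi hUVmi]
    calc |∫ p, (U p * F p - U p * V p)| ≤ ∫ p, |U p * F p - U p * V p| := by
          simpa [Real.norm_eq_abs] using
            norm_integral_le_integral_norm (μ := volume) (fun p => U p * F p - U p * V p)
      _ ≤ ∫ p, |V p - F p| := by
          apply integral_mono (hUFi.sub hUVmi).abs hVFdiffi.abs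
          intro p
          calc |U p * F p - U p * V p| = |U p| * |F p - V p| := by
                rw [← abs_mul]; ring_nf
            _ ≤ 1 * |F p - V p| := mul_le_mul_of_nonneg_right (hUb p) (abs_nonneg _)
            _ = |V p - F p| := by rw [one_mul, abs_sub_comm]
      _ ≤ ε := happ
  -- (5) |∫ V*F - ∫ V*V| ≤ ε
  have h5 : |(∫ p, V p * F p) - ∫ p, V p * V p| ≤ ε := by
    rw [← integral_sub hVFi hVVi]
    calc |∫ p, (V p * F p - V p * V p)| ≤ ∫ p, |V p * F p - V p * V p| := by
          simpa [Real.norm_eq_abs] using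
            norm_integral_le_integral_norm (μ := volume) (fun p => V p * F p - V p * V p)
      _ ≤ ∫ p, |V p - F p| := by
          apply integral_mono (hVFi.sub hVVi).abs hVFdiffi.abs
          intro p
          calc |V p * F p - V p * V p| = |V p| * |F p - V p| := by
                rw [← abs_mul]; ring_nf
            _ ≤ 1 * |F p - V p| := mul_le_mul_of_nonneg_right (hVb p) (abs_nonneg _)
            _ = |V p - F p| := by rw [one_mul, abs_sub_comm]
      _ ≤ ε := happ
  -- (6) ∫ V*V = ∫ V
  have h6 : (∫ p, V p * V p) = ∫ p, V p := by
    apply integral_congr_ae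
    filter_upwards [hV01ae] with p hp
    rcases hp with h | h <;> rw [h] <;> ring
  -- (2') ∫ U*F - ∫ V*F = ∫ (U-V)*F
  have h2' : (∫ p, U p * F p) - (∫ p, V p * F p) = ∫ p, (U p - V p) * F p := by
    rw [← integral_sub hUFi hVFi]
    apply integral_congr_ae
    apply Filter.Eventually.of_forall
    intro p
    ring
  -- (7) ∫ |U - V| = ∫ U + ∫ V - 2 ∫ U*V
  have h7 : (∫ p, |U p - V p|) = (∫ p, U p) + (∫ p, V p) - 2 * ∫ p, U p * V p := by
    have hptw : (fun p => |U p - V p|) =ᵐ[volume]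
        fun p => U p + V p - 2 * (U p * V p) := by
      filter_upwards [hV01ae] with p hp
      rcases hp with h | h
      · rw [h]
        rw [sub_zero, abs_of_nonneg (hU01 p).1]
        ring
      · rw [h]
        rw [abs_of_nonpos (by linarith [(hU01 p).2] : U p - 1 ≤ 0)]
        ring
    rw [integral_congr_ae hptw]
    have hsub := integral_sub (hUi.add hVi) (hUVmi.const_mul 2)
    simp only [Pi.add_apply] at hsub
    rw [hsub, integral_add hUi hVi, integral_const_mul]
  -- combine
  have h3' := abs_le.mp h3
  have h4' := abs_le.mp h4
  have h5' := abs_le.mp h5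
  rw [h7]
  have hcomb : (∫ p, U p * V p) ≥ (∫ p, V p) - K * d - 2 * ε := by
    have e1 : (∫ p, U p * F p) ≥ (∫ p, V p * F p) - K * d := by
      have := h3'.2
      rw [← h2'] at this
      linarith [h3'.1, h2']
    linarith [h4'.1, h4'.2, h5'.1, h5'.2, h6]
  linarith [h1]

end GraphonAux


namespace GraphonAux

lemma mphi0_id : MPhi0 (id : I01 → I01) := by
  refine ⟨Function.bijective_id, ⟨aemeasurable_id, fun A _ => rfl⟩, ?_⟩
  have h : Function.invFun (id : I01 → I01) = id := funext fun x =>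
    Function.leftInverse_invFun Function.injective_id x
  rw [h]
  exact ⟨aemeasurable_id, fun A _ => rfl⟩

lemma gDelta1_nonneg (U W : I01 × I01 → ℝ) : 0 ≤ gDelta1 U W := by
  apply Real.sInf_nonneg
  rintro r ⟨φ, hφ, rfl⟩
  exact integral_nonneg fun p => abs_nonneg _

end GraphonAux

/-- If `W` is `{0,1}`-valued a.e., then convergence to `W` in cut distance implies
convergence in `δ₁`. -/
theorem tendsto_gDelta1_of_tendsto_gDeltaBox
    (W : I01 × I01 → ℝ) (hW : IsGraphon W) (hW01 : ∀ p, W p ∈ Set.Icc (0 : ℝ) 1)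
    (hW01ae : ∀ᵐ p ∂(volume : Measure (I01 × I01)), W p = 0 ∨ W p = 1)
    (Wseq : ℕ → I01 × I01 → ℝ) (hWseq : ∀ n, IsGraphon (Wseq n))
    (hWseq01 : ∀ n p, Wseq n p ∈ Set.Icc (0 : ℝ) 1)
    (hbox : Filter.Tendsto (fun n => gDeltaBox (Wseq n) W) Filter.atTop (nhds 0)) :
    Filter.Tendsto (fun n => gDelta1 (Wseq n) W) Filter.atTop (nhds 0) := by
  classical
  obtain ⟨hWsymm, ⟨CW, hCW⟩, hWmeas⟩ := hW
  rw [NormedAddCommGroup.tendsto_nhds_zero]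
  intro ε hε
  obtain ⟨k, c, A, B, hA, hB, happ⟩ :=
    GraphonAux.exists_rect_combo_approx W hWmeas hCW (ε := ε / 8) (by positivity)
  set K : ℝ := ∑ i, |c i| with hK
  have hK0 : 0 ≤ K := Finset.sum_nonneg fun i _ => abs_nonneg _
  set δ : ℝ := ε / (4 * (1 + 2 * K)) with hδ
  have hδ0 : 0 < δ := by positivity
  have hδval : (1 + 2 * K) * δ = ε / 4 := by
    rw [hδ]
    field_simp
  filter_upwards [hbox.eventually_lt_const hδ0] with n hn
  obtain ⟨hWnsymm, ⟨Cn, hCn⟩, hWnmeas⟩ := hWseq n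
  -- extract a near-optimal measure-preserving map
  simp only [gDeltaBox] at hn
  have hne : { r : ℝ | ∃ φ : I01 → I01, MPhi0 φ ∧
      r = cutNorm (fun p => Wseq n p - compMap W φ p) }.Nonempty :=
    ⟨_, id, GraphonAux.mphi0_id, rfl⟩
  obtain ⟨r, ⟨φ, hφ0, rfl⟩, hrδ⟩ := exists_lt_of_csInf_lt hne hn
  obtain ⟨φ', hφ'm, hφae, hφ'mp⟩ := GraphonAux.exists_measurable_rep hφ0.2.1
  have hpair := GraphonAux.pair_measurePreserving hφ'mp
  set V : I01 × I01 → ℝ := fun p => W (φ' p.1, φ' p.2) with hVdef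
  have hcompae : compMap W φ =ᵐ[volume] V := GraphonAux.compMap_ae_eq hφae W
  have hdiffae : (fun p => Wseq n p - compMap W φ p) =ᵐ[volume]
      fun p => Wseq n p - V p := by
    filter_upwards [hcompae] with p hp
    rw [hp]
  have hVmeas : AEMeasurable V volume :=
    hWmeas.comp_quasiMeasurePreserving hpair.quasiMeasurePreserving
  have hV01 : ∀ p, V p ∈ Set.Icc (0:ℝ) 1 := fun p => hW01 _
  have hV01ae : ∀ᵐ p ∂(volume : Measure (I01 × I01)), V p = 0 ∨ V p = 1 :=
    hpair.quasiMeasurePreserving.ae hW01ae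
  -- transport the rectangle approximation through φ'
  set A' : Fin k → Set I01 := fun i => φ' ⁻¹' (A i) with hA'def
  set B' : Fin k → Set I01 := fun i => φ' ⁻¹' (B i) with hB'def
  have hA' : ∀ i, MeasurableSet (A' i) := fun i => hφ'm (hA i)
  have hB' : ∀ i, MeasurableSet (B' i) := fun i => hφ'm (hB i)
  have hFm : Measurable (fun q => ∑ i, c i * (A i ×ˢ B i).indicator 1 q) := by
    apply Finset.measurable_sum
    intro i _
    exact (measurable_const.indicator ((hA i).prod (hB i))).const_mul _
  have happV : ∫ p, |V p - ∑ i, c i * (A' i ×ˢ B' i).indicator 1 p| ≤ ε / 8 := by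
    have hcomp : ∀ p : I01 × I01,
        (∑ i, c i * (A i ×ˢ B i).indicator 1 (Prod.map φ' φ' p))
          = ∑ i, c i * ((A' i ×ˢ B' i).indicator 1 p) := by
      intro p
      rfl
    have hmf : AEStronglyMeasurable
        (fun q : I01 × I01 => |W q - ∑ i, c i * (A i ×ˢ B i).indicator 1 q|)
        (Measure.map (Prod.map φ' φ') volume) := by
      rw [hpair.map_eq]
      simpa [Real.norm_eq_abs] using
        ((hWmeas.sub hFm.aemeasurable).aestronglyMeasurable).norm
    calc ∫ p, |V p - ∑ i, c i * (A' i ×ˢ B' i).indicator 1 p|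
        = ∫ p, (fun q : I01 × I01 =>
            |W q - ∑ i, c i * (A i ×ˢ B i).indicator 1 q|) (Prod.map φ' φ' p) := by
          apply integral_congr_ae
          apply Filter.Eventually.of_forall
          intro p
          simp only
          rw [hcomp p]
          rfl
      _ = ∫ q, |W q - ∑ i, c i * (A i ×ˢ B i).indicator 1 q| := by
          rw [← integral_map hpair.measurable.aemeasurable hmf, hpair.map_eq]
      _ ≤ ε / 8 := happ.le
  -- key estimate
  have hkey := GraphonAux.key_estimate (Wseq n) V hWnmeas hVmeas (hWseq01 n) hV01 hV01ae
    c A' B' hA' hB' happV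
  have hcut : cutNorm (fun p => Wseq n p - V p)
      = cutNorm (fun p => Wseq n p - compMap W φ p) :=
    GraphonAux.cutNorm_congr hdiffae.symm
  have hcut' : cutNorm (fun p => Wseq n p - V p) < δ := by
    rw [hcut]; exact hrδ
  have hl1 : l1Norm (fun p => Wseq n p - compMap W φ p) = ∫ p, |Wseq n p - V p| :=
    GraphonAux.l1Norm_congr hdiffae
  have hbdd : BddBelow { r : ℝ | ∃ ψ : I01 → I01, MPhi0 ψ ∧
      r = l1Norm (fun p => Wseq n p - compMap W ψ p) } := by
    refine ⟨0, ?_⟩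
    rintro r ⟨ψ, hψ, rfl⟩
    exact integral_nonneg fun p => abs_nonneg _
  have hle : gDelta1 (Wseq n) W ≤ l1Norm (fun p => Wseq n p - compMap W φ p) := by
    apply csInf_le hbdd
    exact ⟨φ, hφ0, rfl⟩
  have hcutnn : 0 ≤ cutNorm (fun p => Wseq n p - V p) := by
    refine le_trans (abs_nonneg _) (GraphonAux.abs_setIntegral_le_cutNorm ?_
      (MeasurableSet.empty.nullMeasurableSet) (MeasurableSet.empty.nullMeasurableSet))
    have hWni : Integrable (Wseq n) volume := GraphonAux.integrable_of_abs_le hWnmeas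
      (C := 1) (fun p => abs_le.mpr ⟨by linarith [(hWseq01 n p).1], (hWseq01 n p).2⟩)
    have hVi : Integrable V volume := GraphonAux.integrable_of_abs_le hVmeas
      (C := 1) (fun p => abs_le.mpr ⟨by linarith [(hV01 p).1], (hV01 p).2⟩)
    exact hWni.sub hVi
  have hfinal : gDelta1 (Wseq n) W ≤ ε / 4 + ε / 2 := by
    calc gDelta1 (Wseq n) W ≤ l1Norm (fun p => Wseq n p - compMap W φ p) := hle
      _ = ∫ p, |Wseq n p - V p| := hl1
      _ ≤ (1 + 2 * K) * cutNorm (fun p => Wseq n p - V p) + 4 * (ε / 8) := hkey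
      _ ≤ (1 + 2 * K) * δ + 4 * (ε / 8) := by
          have := mul_le_mul_of_nonneg_left hcut'.le
            (by positivity : (0:ℝ) ≤ 1 + 2 * K)
          linarith
      _ = ε / 4 + ε / 2 := by rw [hδval]; ring
  rw [Real.norm_eq_abs, abs_of_nonneg (GraphonAux.gDelta1_nonneg _ _)]
  linarith


end
end
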